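/- arXiv:2104.13753 — 2 statements merged into one kernel-verified Lean document; each statement's English description precedes it below -/
import Mathlib

section
/- (Interval) Let d = 1 and let μ be Lebesgue measure restricted to the interval [−1/2, 1/2] (a probability measure). Then λ₁(μ) = 1/2. -/
open MeasureTheory Filter Topology ProbabilityTheory
open scoped ENNReal NNReal symmDiff Classical RealInnerProductSpace

noncomputable section

/-- `d`-dimensional Euclidean space. -/
abbrev Euc (d : ℕ) : Type := EuclideanSpace ℝ (Fin d)

/-- The sum-of-norms clustering functional
`J_{μ,λ}(u) = ∫ |u x - x|² dμ + λ ∬ |u x - u y| dμ dμ`. -/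
def SONJ {d : ℕ} (μ : Measure (Euc d)) (lam : ℝ) (u : Euc d → Euc d) : ℝ :=
  ∫ x, ‖u x - x‖ ^ 2 ∂μ + lam * ∫ x, ∫ y, ‖u x - u y‖ ∂μ ∂μ

/-- `u` is a minimizer of `J_{μ,λ}` over `L²(μ; ℝ^d)`.  Since `J_{μ,λ}` has a unique
minimizer (up to `μ`-a.e. equality), this predicate characterizes `u_{μ,λ}`. -/
def IsSONMin {d : ℕ} (μ : Measure (Euc d)) (lam : ℝ) (u : Euc d → Euc d) : Prop :=
  MemLp u 2 μ ∧ ∀ v : Euc d → Euc d, MemLp v 2 μ → SONJ μ lam u ≤ SONJ μ lam v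

/-- `μ` is `λ`-cohesive: the minimizer of `J_{μ,λ}` is `μ`-a.e. constant. -/
def Cohesive {d : ℕ} (μ : Measure (Euc d)) (lam : ℝ) : Prop :=
  ∃ u : Euc d → Euc d, IsSONMin μ lam u ∧ ∃ c : Euc d, u =ᵐ[μ] fun _ => c

/-- `μ` is `λ`-shattered: the minimizer of `J_{μ,λ}` agrees `μ`-a.e. with a measurable
injection. -/
def Shattered {d : ℕ} (μ : Measure (Euc d)) (lam : ℝ) : Prop :=
  ∃ u : Euc d → Euc d, IsSONMin μ lam u ∧
    ∃ v : Euc d → Euc d, Measurable v ∧ Function.Injective v ∧ u =ᵐ[μ] v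

/-- `λ₁(μ) = inf {λ ≥ 0 | μ is λ-cohesive}`. -/
def lambda1 {d : ℕ} (μ : Measure (Euc d)) : ℝ :=
  sInf {lam : ℝ | 0 ≤ lam ∧ Cohesive μ lam}

/-- `λ⋆(μ) = sup {λ ≥ 0 | μ is λ-shattered}`. -/
def lambdaStar {d : ℕ} (μ : Measure (Euc d)) : ℝ :=
  sSup {lam : ℝ | 0 ≤ lam ∧ Shattered μ lam}

/-- The level set (cluster) of `u` containing `x`: `V_{u,x} = u⁻¹({u x})`. -/
def Vset {d : ℕ} (u : Euc d → Euc d) (x : Euc d) : Set (Euc d) := {y | u y = u x}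

/-- The `μ`-centroid of a set `V`: the `μ`-average of `V` if `μ V > 0`, and the unique
element of `V` if `V` is a singleton (otherwise junk). -/
def muCentroid {d : ℕ} (μ : Measure (Euc d)) (V : Set (Euc d)) : Euc d :=
  if 0 < μ V then (μ V).toReal⁻¹ • ∫ x in V, x ∂μ
  else if h : ∃ x, V = {x} then h.choose else 0

/-- The first canonical basis vector of `ℝ^d`. -/
def e1 (d : ℕ) : Euc d := if h : 0 < d then EuclideanSpace.single (⟨0, h⟩ : Fin d) 1 else 0

/-- The constant `γ_d` from the paper. -/
def gammaD (d : ℕ) : ℝ :=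
  ((2 * (d : ℝ) + 1) / (2 * (d : ℝ) + 4)) *
    (if Even d then
      (((d : ℝ) + 1) * ((Nat.factorial (2 * d) : ℝ)) * Real.pi) /
        (2 ^ (3 * d) * ((Nat.factorial (d / 2) : ℝ)) ^ 2 * ((Nat.factorial d : ℝ)))
    else
      (((d : ℝ) + 1) * ((Nat.factorial ((d - 1) / 2) : ℝ)) ^ 2 *
          ((Nat.factorial (2 * d) : ℝ))) /
        (2 ^ d * ((Nat.factorial d : ℝ)) ^ 3))

/-- The union of the two open unit balls centered at `± r e₁`. -/
def ballUnion (d : ℕ) (r : ℝ) : Set (Euc d) :=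
  Metric.ball (-(r • e1 d)) 1 ∪ Metric.ball (r • e1 d) 1

/-- The empirical measure `μ_N = N⁻¹ ∑_{n<N} δ_{X n ω}`. -/
def empMeas {d : ℕ} {Ω : Type*} (X : ℕ → Ω → Euc d) (N : ℕ) (ω : Ω) : Measure (Euc d) :=
  (N : ℝ≥0∞)⁻¹ • ∑ n ∈ Finset.range N, Measure.dirac (X n ω)

namespace S14

def φmap : Euc 1 ≃ᵐ ℝ :=
  (MeasurableEquiv.toLp 2 (Fin 1 → ℝ)).symm.trans (MeasurableEquiv.funUnique (Fin 1) ℝ)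

lemma φ_apply (x : Euc 1) : φmap x = x 0 := rfl

def SI : Set (Euc 1) := {x : Euc 1 | x 0 ∈ Set.Icc (-(1/2) : ℝ) (1/2)}

def μI : Measure (Euc 1) := volume.restrict SI

def νI : Measure ℝ := volume.restrict (Set.Icc (-(1/2) : ℝ) (1/2))

lemma hφ : MeasurePreserving φmap (volume : Measure (Euc 1)) (volume : Measure ℝ) :=
  (volume_preserving_funUnique (Fin 1) ℝ).comp
    (EuclideanSpace.volume_preserving_symm_measurableEquiv_toLp (Fin 1))

lemma SI_preimage : SI = φmap ⁻¹' (Set.Icc (-(1/2) : ℝ) (1/2)) := rfl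

lemma hres : MeasurePreserving φmap μI νI := by
  have := hφ.restrict_preimage (s := Set.Icc (-(1/2) : ℝ) (1/2)) measurableSet_Icc
  rwa [← SI_preimage] at this

lemma integral_transfer (g : ℝ → ℝ) : ∫ x, g (x 0) ∂μI = ∫ t, g t ∂νI := by
  simpa [φ_apply] using hres.integral_comp φmap.measurableEmbedding g

lemma norm_euc1 (x : Euc 1) : ‖x‖ = |x 0| := by
  simp [EuclideanSpace.norm_eq, Fin.sum_univ_one, Real.sqrt_sq_eq_abs]

lemma νI_integral (g : ℝ → ℝ) : ∫ t, g t ∂νI = ∫ t in (-(1/2) : ℝ)..(1/2), g t := by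
  rw [νI, integral_Icc_eq_integral_Ioc, intervalIntegral.integral_of_le (by norm_num)]

lemma νI_univ : νI Set.univ = 1 := by
  simp [νI, Real.volume_Icc]
  norm_num

lemma νI_id : ∫ t, t ∂νI = 0 := by
  rw [νI_integral]
  simp

lemma νI_sq : ∫ t, t ^ 2 ∂νI = 1 / 12 := by
  rw [νI_integral, integral_pow]
  norm_num

lemma νI_abs (t : ℝ) (ht : t ∈ Set.Icc (-(1/2) : ℝ) (1/2)) :
    ∫ s, |t - s| ∂νI = t ^ 2 + 1 / 4 := by
  obtain ⟨h1, h2⟩ := ht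
  rw [νI_integral]
  have hint : ∀ a b : ℝ, IntervalIntegrable (fun s => |t - s|) volume a b := fun a b =>
    ((continuous_const.sub continuous_id).abs).intervalIntegrable a b
  rw [← intervalIntegral.integral_add_adjacent_intervals (b := t) (hint _ _) (hint _ _)]
  have e1 : ∫ s in (-(1/2) : ℝ)..t, |t - s| = ∫ s in (-(1/2) : ℝ)..t, (t - s) := by
    apply intervalIntegral.integral_congr
    intro s hs
    rw [Set.uIcc_of_le h1] at hs
    exact abs_of_nonneg (by linarith [hs.2])
  have e2 : ∫ s in t..(1/2 : ℝ), |t - s| = ∫ s in t..(1/2 : ℝ), (s - t) := by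
    apply intervalIntegral.integral_congr
    intro s hs
    rw [Set.uIcc_of_le h2] at hs
    show |t - s| = s - t
    rw [abs_sub_comm]
    exact abs_of_nonneg (by linarith [hs.1])
  rw [e1, e2]
  have i1 : ∫ s in (-(1/2) : ℝ)..t, (t - s) = t * (t - (-(1/2))) - (t^2 - (-(1/2))^2)/2 := by
    rw [intervalIntegral.integral_sub (continuous_const.intervalIntegrable _ _) intervalIntegral.intervalIntegrable_id]
    simp [integral_id, mul_comm]
    try ring
  have i2 : ∫ s in t..(1/2 : ℝ), (s - t) = ((1/2:ℝ)^2 - t^2)/2 - t * ((1/2:ℝ) - t) := by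
    rw [intervalIntegral.integral_sub intervalIntegral.intervalIntegrable_id (continuous_const.intervalIntegrable _ _)]
    simp [integral_id, mul_comm]
    try ring
  rw [i1, i2]; ring

lemma νI_double : ∫ s, (∫ t, |s - t| ∂νI) ∂νI = 1 / 3 := by
  haveI : IsProbabilityMeasure νI := ⟨νI_univ⟩
  have heq : ∫ s, (∫ t, |s - t| ∂νI) ∂νI = ∫ s, (s ^ 2 + 1/4) ∂νI := by
    apply integral_congr_ae
    filter_upwards [ae_restrict_mem measurableSet_Icc] with s hs
    exact νI_abs s hs
  have hsq2 : Integrable (fun s : ℝ => s ^ 2) νI := (continuous_pow 2).integrableOn_Icc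
  rw [heq, integral_add hsq2 (integrable_const _), νI_sq,
    integral_const, probReal_univ]
  norm_num

lemma meas_SI : MeasurableSet SI := φmap.measurable measurableSet_Icc

lemma ae_SI : ∀ᵐ x ∂μI, x ∈ SI := by
  rw [μI]; exact ae_restrict_mem meas_SI

lemma ae_norm_le : ∀ᵐ x ∂μI, ‖x‖ ≤ 1/2 := by
  filter_upwards [ae_SI] with x hx
  rw [norm_euc1]
  exact abs_le.2 ⟨hx.1, hx.2⟩

instance : IsProbabilityMeasure μI := by
  constructor
  have := hres.measure_preimage (s := Set.univ) MeasurableSet.univ.nullMeasurableSet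
  simpa [νI_univ] using this

lemma memL2_id : MemLp (fun x : Euc 1 => x) 2 μI :=
  MemLp.of_bound aestronglyMeasurable_id (1/2) ae_norm_le

lemma int_id : Integrable (fun x : Euc 1 => x) μI := memL2_id.integrable (by norm_num)

lemma μI_center : ∫ x, x ∂μI = (0 : Euc 1) := by
  have h0 : (EuclideanSpace.proj (0 : Fin 1) : Euc 1 →L[ℝ] ℝ) (∫ x, x ∂μI)
      = ∫ x, x 0 ∂μI := by
    rw [← ContinuousLinearMap.integral_comp_comm _ int_id]
    rfl
  have h1 : ∫ x, x 0 ∂μI = 0 := by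
    have := integral_transfer (fun t => t)
    simpa [νI_id] using this
  ext i
  have hi : i = 0 := Subsingleton.elim i 0
  subst hi
  show (∫ x, x ∂μI) 0 = (0 : Euc 1) 0
  have h2 : (∫ x, x ∂μI) 0 = (EuclideanSpace.proj (0 : Fin 1) : Euc 1 →L[ℝ] ℝ) (∫ x, x ∂μI) := rfl
  rw [h2, h0, h1]
  rfl

lemma μI_normsq : ∫ x, ‖x‖^2 ∂μI = 1/12 := by
  calc ∫ x, ‖x‖^2 ∂μI = ∫ x, (x 0)^2 ∂μI := by
        apply integral_congr_ae
        filter_upwards with x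
        rw [norm_euc1, sq_abs]
  _ = ∫ t, t^2 ∂νI := integral_transfer (fun t => t^2)
  _ = 1/12 := νI_sq

lemma μI_dd : ∫ x, ∫ y, ‖x - y‖ ∂μI ∂μI = 1/3 := by
  have hin : ∀ x : Euc 1, ∫ y, ‖x - y‖ ∂μI = ∫ t, |x 0 - t| ∂νI := by
    intro x
    calc ∫ y, ‖x - y‖ ∂μI = ∫ y, |x 0 - y 0| ∂μI := by
          apply integral_congr_ae
          filter_upwards with y
          rw [norm_euc1]; rfl
    _ = ∫ t, |x 0 - t| ∂νI := integral_transfer (fun t => |x 0 - t|)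
  calc ∫ x, ∫ y, ‖x - y‖ ∂μI ∂μI
      = ∫ x, (∫ t, |x 0 - t| ∂νI) ∂μI := by
        apply integral_congr_ae
        filter_upwards with x
        exact hin x
  _ = ∫ s, (∫ t, |s - t| ∂νI) ∂νI := integral_transfer (fun s => ∫ t, |s - t| ∂νI)
  _ = 1/3 := νI_double

lemma inner_int (v : Euc 1 → Euc 1) (hv : MemLp v 2 μI) :
    Integrable (fun x : Euc 1 => ⟪x, v x⟫) μI := by
  have hv1 : Integrable v μI := hv.integrable (by norm_num)
  refine Integrable.mono' (hv1.norm.const_mul (1/2)) (aestronglyMeasurable_id.inner hv.1) ?_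
  filter_upwards [ae_norm_le] with x hx
  calc ‖⟪x, v x⟫‖ ≤ ‖x‖ * ‖v x‖ := norm_inner_le_norm _ _
  _ ≤ 1/2 * ‖v x‖ := mul_le_mul_of_nonneg_right hx (norm_nonneg _)

lemma key_ineq (v : Euc 1 → Euc 1) (hv : MemLp v 2 μI) :
    2 * ∫ x, ⟪x, v x⟫ ∂μI ≤ ∫ x, ∫ y, ‖v x - v y‖ ∂μI ∂μI := by
  have hv1 : Integrable v μI := hv.integrable (by norm_num)
  set V : Euc 1 := ∫ y, v y ∂μI with hV
  have hinner_int := inner_int v hv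
  have hFmeas : AEStronglyMeasurable (fun p : Euc 1 × Euc 1 => ‖v p.1 - v p.2‖) (μI.prod μI) :=
    (hv.1.comp_fst.sub hv.1.comp_snd).norm
  have hG : AEStronglyMeasurable (fun x => ∫ y, ‖v x - v y‖ ∂μI) μI :=
    hFmeas.integral_prod_right'
  have hRint : Integrable (fun x => ∫ y, ‖v x - v y‖ ∂μI) μI := by
    refine Integrable.mono' (hv1.norm.add (integrable_const (∫ y, ‖v y‖ ∂μI))) hG ?_
    refine Eventually.of_forall fun x => ?_
    rw [Real.norm_eq_abs, abs_of_nonneg (integral_nonneg fun y => norm_nonneg _)]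
    calc ∫ y, ‖v x - v y‖ ∂μI ≤ ∫ y, (‖v x‖ + ‖v y‖) ∂μI :=
          integral_mono ((integrable_const _).sub hv1).norm
            ((integrable_const _).add hv1.norm) (fun y => norm_sub_le _ _)
    _ = ‖v x‖ + ∫ y, ‖v y‖ ∂μI := by
          rw [integral_add (integrable_const _) hv1.norm, integral_const, probReal_univ]
          simp
  have hae : ∀ᵐ x ∂μI, ⟪x, v x⟫ - ⟪V, x⟫ ≤ 1/2 * ∫ y, ‖v x - v y‖ ∂μI := by
    filter_upwards [ae_norm_le] with x hx
    have hsub : Integrable (fun y : Euc 1 => v x - v y) μI := (integrable_const (v x)).sub hv1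
    have e1 : ∫ y, ⟪x, v x - v y⟫ ∂μI = ⟪x, v x - V⟫ := by
      rw [integral_inner hsub x, integral_sub (integrable_const _) hv1, integral_const,
        probReal_univ]
      simp
      rfl
    have e2 : ⟪x, v x - V⟫ ≤ 1/2 * ∫ y, ‖v x - v y‖ ∂μI := by
      rw [← e1]
      calc ∫ y, ⟪x, v x - v y⟫ ∂μI ≤ ∫ y, 1/2 * ‖v x - v y‖ ∂μI := by
            refine integral_mono (hsub.const_inner x)
              (hsub.norm.const_mul _) fun y => ?_
            calc ⟪x, v x - v y⟫ ≤ ‖x‖ * ‖v x - v y‖ := real_inner_le_norm _ _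
            _ ≤ 1/2 * ‖v x - v y‖ := mul_le_mul_of_nonneg_right hx (norm_nonneg _)
      _ = 1/2 * ∫ y, ‖v x - v y‖ ∂μI := integral_const_mul _ _
    have e3 : ⟪x, v x - V⟫ = ⟪x, v x⟫ - ⟪V, x⟫ := by
      rw [inner_sub_right, real_inner_comm V x]
    rw [← e3]
    exact e2
  have hVint : Integrable (fun x : Euc 1 => ⟪V, x⟫) μI := int_id.const_inner V
  have main : ∫ x, (⟪x, v x⟫ - ⟪V, x⟫) ∂μI ≤ ∫ x, 1/2 * ∫ y, ‖v x - v y‖ ∂μI ∂μI :=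
    integral_mono_ae (hinner_int.sub hVint) (hRint.const_mul _) hae
  rw [integral_sub hinner_int hVint, integral_inner int_id V, μI_center,
    inner_zero_right, sub_zero, integral_const_mul] at main
  linarith

-- KEY sharp inequality machinery (to be inserted into S14)
section Key

lemma ae_nu : ∀ᵐ t ∂νI, |t| ≤ 1/2 := by
  rw [νI]
  filter_upwards [ae_restrict_mem measurableSet_Icc] with t ht
  exact abs_le.2 ⟨ht.1, ht.2⟩

instance : IsProbabilityMeasure νI := ⟨νI_univ⟩

lemma nu_int_id : Integrable (fun t : ℝ => t) νI := by
  refine Integrable.mono' (integrable_const (1/2 : ℝ)) aestronglyMeasurable_id ?_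
  filter_upwards [ae_nu] with t ht
  simpa using ht

/-- signed indicator of the interval from `0` to `a`. -/
def ψ (a v : ℝ) : ℝ := (if v < a then (1:ℝ) else 0) - (if v < 0 then (1:ℝ) else 0)

lemma ψ_zero (v : ℝ) : ψ 0 v = 0 := by simp [ψ]

lemma ψ_eq (a v : ℝ) : ψ a v = Set.indicator (Set.Ico 0 a) (fun _ => (1:ℝ)) v
    - Set.indicator (Set.Ico a 0) (fun _ => (1:ℝ)) v := by
  simp only [ψ, Set.indicator_apply, Set.mem_Ico]
  split_ifs <;> simp_all <;> linarith

lemma ψ_integrable (a : ℝ) : Integrable (ψ a) volume := by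
  have h : ψ a = fun v => Set.indicator (Set.Ico 0 a) (fun _ => (1:ℝ)) v
      - Set.indicator (Set.Ico a 0) (fun _ => (1:ℝ)) v := funext fun v => ψ_eq a v
  rw [h]
  have h1 : ∀ b c : ℝ, Integrable (Set.indicator (Set.Ico b c) (fun _ => (1:ℝ))) volume := by
    intro b c
    rw [integrable_indicator_iff measurableSet_Ico]
    refine integrableOn_const ?_
    rw [Real.volume_Ico]
    exact ENNReal.ofReal_lt_top.ne
  exact (h1 0 a).sub (h1 a 0)

lemma ψ_integral (a : ℝ) : ∫ v, ψ a v = a := by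
  have h : ∀ b c : ℝ, ∫ v, Set.indicator (Set.Ico b c) (fun _ => (1:ℝ)) v
      = (volume (Set.Ico b c)).toReal := by
    intro b c
    rw [integral_indicator measurableSet_Ico, setIntegral_const, smul_eq_mul, mul_one, measureReal_def]
  have h1 : ∀ b c : ℝ, Integrable (Set.indicator (Set.Ico b c) (fun _ => (1:ℝ))) volume := by
    intro b c
    rw [integrable_indicator_iff measurableSet_Ico]
    refine integrableOn_const ?_
    rw [Real.volume_Ico]
    exact ENNReal.ofReal_lt_top.ne
  calc ∫ v, ψ a v = ∫ v, (Set.indicator (Set.Ico 0 a) (fun _ => (1:ℝ)) v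
      - Set.indicator (Set.Ico a 0) (fun _ => (1:ℝ)) v) := by
        apply integral_congr_ae
        filter_upwards with v
        exact ψ_eq a v
  _ = (volume (Set.Ico (0:ℝ) a)).toReal - (volume (Set.Ico a 0)).toReal := by
        rw [integral_sub (h1 0 a) (h1 a 0), h, h]
  _ = a := by
        rw [Real.volume_Ico, Real.volume_Ico]
        rcases le_total 0 a with h'|h'
        · rw [ENNReal.toReal_ofReal (by linarith : (0:ℝ) ≤ a - 0),
            ENNReal.ofReal_eq_zero.2 (by linarith : (0:ℝ) - a ≤ 0)]
          simp
        · rw [ENNReal.ofReal_eq_zero.2 (by linarith : a - 0 ≤ 0),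
            ENNReal.toReal_ofReal (by linarith : (0:ℝ) ≤ 0 - a)]
          simp

lemma ψ_sub (a b v : ℝ) : ψ a v - ψ b v
    = (if v < a then (1:ℝ) else 0) - (if v < b then (1:ℝ) else 0) := by
  simp only [ψ]; ring

lemma ψ_abs_sub (a b v : ℝ) : |ψ a v - ψ b v| = ψ (max a b) v - ψ (min a b) v := by
  rw [ψ_sub, ψ_sub]
  rcases le_total a b with h|h
  · rw [max_eq_right h, min_eq_left h]
    split_ifs <;> simp_all <;> linarith
  · rw [max_eq_left h, min_eq_right h]
    split_ifs <;> simp_all <;> linarith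

lemma ψ_abs_integrable (a b : ℝ) : Integrable (fun v => |ψ a v - ψ b v|) volume :=
  ((ψ_integrable a).sub (ψ_integrable b)).abs

lemma ψ_abs_integral (a b : ℝ) : ∫ v, |ψ a v - ψ b v| = |a - b| := by
  calc ∫ v, |ψ a v - ψ b v| = ∫ v, (ψ (max a b) v - ψ (min a b) v) := by
        apply integral_congr_ae
        filter_upwards with v
        exact ψ_abs_sub a b v
  _ = max a b - min a b := by
        rw [integral_sub (ψ_integrable _) (ψ_integrable _), ψ_integral, ψ_integral]
  _ = |a - b| := (max_sub_min_eq_abs a b).trans (abs_sub_comm b a)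

lemma ψ_norm_integral (a : ℝ) : ∫ v, ‖ψ a v‖ = |a| := by
  have h : ∀ v, ‖ψ a v‖ = |ψ a v - ψ 0 v| := by
    intro v; rw [ψ_zero, sub_zero, Real.norm_eq_abs]
  calc ∫ v, ‖ψ a v‖ = ∫ v, |ψ a v - ψ 0 v| := by
        apply integral_congr_ae; filter_upwards with v; exact h v
  _ = |a - 0| := ψ_abs_integral a 0
  _ = |a| := by rw [sub_zero]

lemma ψ_meas_comp {γ : Type*} [MeasurableSpace γ] {g h : γ → ℝ} (hg : Measurable g)
    (hh : Measurable h) : Measurable fun q => ψ (g q) (h q) := by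
  unfold ψ
  refine Measurable.sub ?_ ?_
  · exact Measurable.ite (measurableSet_lt hh hg) measurable_const measurable_const
  · exact Measurable.ite (measurableSet_lt hh measurable_const) measurable_const measurable_const

lemma ψ_meas_pair {f : ℝ → ℝ} (hf : Measurable f) :
    Measurable (fun p : ℝ × ℝ => ψ (f p.1) p.2) :=
  ψ_meas_comp (hf.comp measurable_fst) measurable_snd

end Key

section Key2

lemma nu_Ici_inter (c : ℝ) (hc : -(1/2) ≤ c) :
    Set.Ici c ∩ Set.Icc (-(1/2) : ℝ) (1/2) = Set.Icc c (1/2) := by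
  ext x
  simp only [Set.mem_inter_iff, Set.mem_Ici, Set.mem_Icc]
  constructor
  · rintro ⟨h1, h2, h3⟩; exact ⟨h1, h3⟩
  · rintro ⟨h1, h2⟩; exact ⟨h1, by linarith, h2⟩

lemma nu_Ici_measure (c : ℝ) (hc : c ∈ Set.Icc (-(1/2) : ℝ) (1/2)) :
    νI (Set.Ici c) = ENNReal.ofReal (1/2 - c) := by
  rw [νI, Measure.restrict_apply measurableSet_Ici, nu_Ici_inter c hc.1, Real.volume_Icc]

lemma nu_restrict_Ici (c : ℝ) (hc : -(1/2) ≤ c) :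
    νI.restrict (Set.Ici c) = volume.restrict (Set.Icc c (1/2)) := by
  rw [νI, Measure.restrict_restrict measurableSet_Ici, nu_Ici_inter c hc]

lemma integral_Ici_id (c : ℝ) (hc : c ∈ Set.Icc (-(1/2) : ℝ) (1/2)) :
    ∫ t in Set.Ici c, t ∂νI = ((1/2)^2 - c^2) / 2 := by
  have h1 : ∫ t in Set.Ici c, t ∂νI = ∫ t in Set.Icc c (1/2), t := by
    rw [nu_restrict_Ici c hc.1]
  rw [h1, integral_Icc_eq_integral_Ioc, ← intervalIntegral.integral_of_le hc.2, integral_id]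

/-- Bathtub principle on the interval. -/
lemma bathtub {E : Set ℝ} (hE : MeasurableSet E) :
    ∫ t in E, t ∂νI ≤ (νI E).toReal * (1 - (νI E).toReal) / 2 := by
  set a : ℝ := (νI E).toReal with ha
  have ha0 : 0 ≤ a := ENNReal.toReal_nonneg
  have ha1 : a ≤ 1 := by
    rw [ha]
    have := prob_le_one (μ := νI) (s := E)
    calc (νI E).toReal ≤ (1 : ℝ≥0∞).toReal := ENNReal.toReal_mono (by norm_num) this
    _ = 1 := by norm_num
  set c : ℝ := 1/2 - a with hc
  have hcmem : c ∈ Set.Icc (-(1/2) : ℝ) (1/2) :=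
    Set.mem_Icc.2 ⟨by rw [hc]; linarith, by rw [hc]; linarith⟩
  have hIci : MeasurableSet (Set.Ici c) := measurableSet_Ici
  have hmE : νI (Set.Ici c) = νI E := by
    rw [nu_Ici_measure c hcmem]
    have : νI E = ENNReal.ofReal a := by
      rw [ha, ENNReal.ofReal_toReal (measure_ne_top _ _)]
    rw [this, hc]
    norm_num
  -- mass balance
  have hfin : ∀ S : Set ℝ, νI S ≠ ⊤ := fun S => measure_ne_top _ _
  have hsplitE : νI (E ∩ Set.Ici c) + νI (E \ Set.Ici c) = νI E :=
    measure_inter_add_diff E hIci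
  have hsplitI : νI (Set.Ici c ∩ E) + νI (Set.Ici c \ E) = νI (Set.Ici c) :=
    measure_inter_add_diff (Set.Ici c) hE
  have hmass : νI (E \ Set.Ici c) = νI (Set.Ici c \ E) := by
    have h2 : νI (Set.Ici c ∩ E) + νI (E \ Set.Ici c)
        = νI (Set.Ici c ∩ E) + νI (Set.Ici c \ E) := by
      calc νI (Set.Ici c ∩ E) + νI (E \ Set.Ici c)
          = νI (E ∩ Set.Ici c) + νI (E \ Set.Ici c) := by rw [Set.inter_comm]
      _ = νI E := hsplitE
      _ = νI (Set.Ici c) := hmE.symm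
      _ = νI (Set.Ici c ∩ E) + νI (Set.Ici c \ E) := hsplitI.symm
    exact (ENNReal.add_right_inj (hfin _)).1 h2
  -- integrability
  have hid := nu_int_id
  have hint : ∀ S : Set ℝ, IntegrableOn (fun t : ℝ => t) S νI := fun S => hid.integrableOn
  -- compare
  have hEdecomp : ∫ t in E, t ∂νI = ∫ t in E ∩ Set.Ici c, t ∂νI + ∫ t in E \ Set.Ici c, t ∂νI := by
    rw [← setIntegral_union (Set.disjoint_left.2 fun x hx hx2 => hx2.2 hx.2)
      (hE.diff hIci) (hint _) (hint _)]
    rw [Set.inter_union_diff]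
  have hIdecomp : ∫ t in Set.Ici c, t ∂νI
      = ∫ t in Set.Ici c ∩ E, t ∂νI + ∫ t in Set.Ici c \ E, t ∂νI := by
    rw [← setIntegral_union (Set.disjoint_left.2 fun x hx hx2 => hx2.2 hx.2)
      (hIci.diff hE) (hint _) (hint _)]
    rw [Set.inter_union_diff]
  have hb1 : ∫ t in E \ Set.Ici c, t ∂νI ≤ c * (νI (E \ Set.Ici c)).toReal := by
    calc ∫ t in E \ Set.Ici c, t ∂νI ≤ ∫ _ in E \ Set.Ici c, c ∂νI := by
          refine setIntegral_mono_on (hint _) (integrable_const c).integrableOn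
            (hE.diff hIci) fun x hx => ?_
          exact le_of_lt (not_le.1 hx.2)
    _ = c * (νI (E \ Set.Ici c)).toReal := by rw [setIntegral_const, smul_eq_mul, mul_comm, measureReal_def]
  have hb2 : c * (νI (Set.Ici c \ E)).toReal ≤ ∫ t in Set.Ici c \ E, t ∂νI := by
    calc c * (νI (Set.Ici c \ E)).toReal = ∫ _ in Set.Ici c \ E, c ∂νI := by
          rw [setIntegral_const, smul_eq_mul, mul_comm, measureReal_def]
    _ ≤ ∫ t in Set.Ici c \ E, t ∂νI := by
          refine setIntegral_mono_on (integrable_const c).integrableOn (hint _)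
            (hIci.diff hE) fun x hx => ?_
          exact hx.1
  have hcomm : ∫ t in E ∩ Set.Ici c, t ∂νI = ∫ t in Set.Ici c ∩ E, t ∂νI := by
    rw [Set.inter_comm]
  have hfinal : ∫ t in E, t ∂νI ≤ ∫ t in Set.Ici c, t ∂νI := by
    rw [hmass] at hb1
    rw [hEdecomp, hIdecomp, hcomm]
    linarith [hb1, hb2]
  calc ∫ t in E, t ∂νI ≤ ∫ t in Set.Ici c, t ∂νI := hfinal
  _ = ((1/2)^2 - c^2)/2 := integral_Ici_id c hcmem
  _ = a * (1 - a) / 2 := by rw [hc]; ring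

end Key2

section Key3

variable {f : ℝ → ℝ}

lemma T_fubini_int (hfm : Measurable f) (hfi : Integrable f νI) :
    Integrable (fun p : ℝ × ℝ => p.1 * ψ (f p.1) p.2) (νI.prod volume) := by
  have hmeas : Measurable (fun p : ℝ × ℝ => p.1 * ψ (f p.1) p.2) :=
    measurable_fst.mul (ψ_meas_pair hfm)
  rw [integrable_prod_iff hmeas.aestronglyMeasurable]
  constructor
  · refine Eventually.of_forall fun t => ?_
    simpa using (ψ_integrable (f t)).const_mul t
  · have h : ∀ t : ℝ, ∫ v, ‖t * ψ (f t) v‖ = |t| * |f t| := by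
      intro t
      calc ∫ v, ‖t * ψ (f t) v‖ = ∫ v, |t| * ‖ψ (f t) v‖ := by
            apply integral_congr_ae; filter_upwards with v
            rw [Real.norm_eq_abs, Real.norm_eq_abs, abs_mul]
      _ = |t| * ∫ v, ‖ψ (f t) v‖ := integral_const_mul _ _
      _ = |t| * |f t| := by rw [ψ_norm_integral]
    simp only [h]
    refine Integrable.mono' (hfi.norm.const_mul (1/2)) ?_ ?_
    · exact ((measurable_id.abs).mul hfm.abs).aestronglyMeasurable
    · filter_upwards [ae_nu] with t ht
      rw [Real.norm_eq_abs, abs_of_nonneg (by positivity : (0:ℝ) ≤ |t| * |f t|)]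
      rw [Real.norm_eq_abs]
      exact mul_le_mul_of_nonneg_right ht (abs_nonneg _)

lemma G_repr (hfm : Measurable f) (v : ℝ) :
    ∫ t, t * ψ (f t) v ∂νI = ∫ t in {t : ℝ | v < f t}, t ∂νI := by
  have hE : MeasurableSet {t : ℝ | v < f t} := measurableSet_lt measurable_const hfm
  have hpt : ∀ t : ℝ, t * ψ (f t) v
      = Set.indicator {t : ℝ | v < f t} (fun t => t) t - (if v < 0 then (1:ℝ) else 0) * t := by
    intro t
    simp only [ψ, Set.indicator_apply, Set.mem_setOf_eq]
    split_ifs <;> ring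
  have hind : Integrable (Set.indicator {t : ℝ | v < f t} (fun t : ℝ => t)) νI :=
    nu_int_id.indicator hE
  have hconst : Integrable (fun t : ℝ => (if v < 0 then (1:ℝ) else 0) * t) νI :=
    nu_int_id.const_mul _
  calc ∫ t, t * ψ (f t) v ∂νI
      = ∫ t, (Set.indicator {t : ℝ | v < f t} (fun t => t) t
          - (if v < 0 then (1:ℝ) else 0) * t) ∂νI := by
        apply integral_congr_ae; filter_upwards with t; exact hpt t
  _ = ∫ t, Set.indicator {t : ℝ | v < f t} (fun t => t) t ∂νI
      - (if v < 0 then (1:ℝ) else 0) * ∫ t, t ∂νI := by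
        rw [integral_sub hind hconst, integral_const_mul]
  _ = ∫ t in {t : ℝ | v < f t}, t ∂νI := by
        rw [νI_id, mul_zero, sub_zero, integral_indicator hE]

lemma T_repr (hfm : Measurable f) (hfi : Integrable f νI) :
    ∫ t, t * f t ∂νI = ∫ v, (∫ t, t * ψ (f t) v ∂νI) := by
  have hint := T_fubini_int hfm hfi
  have h1 : ∀ t : ℝ, t * f t = ∫ v, t * ψ (f t) v := by
    intro t
    rw [integral_const_mul, ψ_integral]
  calc ∫ t, t * f t ∂νI = ∫ t, (∫ v, t * ψ (f t) v) ∂νI := by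
        apply integral_congr_ae; filter_upwards with t; exact h1 t
  _ = ∫ v, (∫ t, t * ψ (f t) v ∂νI) := integral_integral_swap hint

lemma pair_abs_integrable (hfm : Measurable f) (hfi : Integrable f νI) :
    Integrable (fun p : ℝ × ℝ => |f p.1 - f p.2|) (νI.prod νI) := by
  have hmeas : Measurable fun p : ℝ × ℝ => |f p.1 - f p.2| :=
    ((hfm.comp measurable_fst).sub (hfm.comp measurable_snd)).abs
  have h1 : Integrable (fun p : ℝ × ℝ => |f p.1|) (νI.prod νI) := by
    have hm : Measurable fun p : ℝ × ℝ => |f p.1| := (hfm.comp measurable_fst).abs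
    rw [integrable_prod_iff hm.aestronglyMeasurable]
    constructor
    · exact Eventually.of_forall fun s =>
        (integrable_const (|f s|)).congr (Eventually.of_forall fun y => rfl)
    · have h : (fun s : ℝ => ∫ _t, ‖|f s|‖ ∂νI) = fun s => |f s| := by
        funext s
        rw [integral_const, probReal_univ, one_smul, Real.norm_eq_abs, abs_abs]
      rw [h]
      exact hfi.abs
  have h2 : Integrable (fun p : ℝ × ℝ => |f p.2|) (νI.prod νI) := by
    have hm : Measurable fun p : ℝ × ℝ => |f p.2| := (hfm.comp measurable_snd).abs
    rw [integrable_prod_iff hm.aestronglyMeasurable]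
    constructor
    · exact Eventually.of_forall fun s => hfi.abs.congr (Eventually.of_forall fun y => rfl)
    · exact (integrable_const (∫ y, ‖|f y|‖ ∂νI)).congr (Eventually.of_forall fun x => rfl)
  refine Integrable.mono' (h1.add h2) hmeas.aestronglyMeasurable ?_
  refine Eventually.of_forall fun p => ?_
  rw [Real.norm_eq_abs, abs_abs]
  exact abs_sub _ _

lemma D_fubini_int (hfm : Measurable f) (hfi : Integrable f νI) :
    Integrable (fun q : (ℝ × ℝ) × ℝ => |ψ (f q.1.1) q.2 - ψ (f q.1.2) q.2|)
      ((νI.prod νI).prod volume) := by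
  have hm1 : Measurable fun q : (ℝ × ℝ) × ℝ => ψ (f q.1.1) q.2 :=
    ψ_meas_comp (hfm.comp (measurable_fst.comp measurable_fst)) measurable_snd
  have hm2 : Measurable fun q : (ℝ × ℝ) × ℝ => ψ (f q.1.2) q.2 :=
    ψ_meas_comp (hfm.comp (measurable_snd.comp measurable_fst)) measurable_snd
  have hmeas : Measurable fun q : (ℝ × ℝ) × ℝ => |ψ (f q.1.1) q.2 - ψ (f q.1.2) q.2| :=
    (hm1.sub hm2).abs
  rw [integrable_prod_iff hmeas.aestronglyMeasurable]
  constructor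
  · exact Eventually.of_forall fun p => ψ_abs_integrable (f p.1) (f p.2)
  · have h : ∀ p : ℝ × ℝ, ∫ v, ‖|ψ (f p.1) v - ψ (f p.2) v|‖ = |f p.1 - f p.2| := by
      intro p
      calc ∫ v, ‖|ψ (f p.1) v - ψ (f p.2) v|‖ = ∫ v, |ψ (f p.1) v - ψ (f p.2) v| := by
            apply integral_congr_ae; filter_upwards with v
            rw [Real.norm_eq_abs, abs_abs]
      _ = |f p.1 - f p.2| := ψ_abs_integral _ _
    simp only [h]
    exact pair_abs_integrable hfm hfi

lemma D_repr (hfm : Measurable f) (hfi : Integrable f νI) :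
    ∫ p, |f p.1 - f p.2| ∂(νI.prod νI)
      = ∫ v, (∫ p, |ψ (f p.1) v - ψ (f p.2) v| ∂(νI.prod νI)) := by
  calc ∫ p, |f p.1 - f p.2| ∂(νI.prod νI)
      = ∫ p, (∫ v, |ψ (f p.1) v - ψ (f p.2) v|) ∂(νI.prod νI) := by
        apply integral_congr_ae; filter_upwards with p
        exact (ψ_abs_integral _ _).symm
  _ = _ := integral_integral_swap (D_fubini_int hfm hfi)

lemma D_section (hfm : Measurable f) (v : ℝ) :
    ∫ p, |ψ (f p.1) v - ψ (f p.2) v| ∂(νI.prod νI)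
      = 2 * ((νI {t : ℝ | v < f t}).toReal * (1 - (νI {t : ℝ | v < f t}).toReal)) := by
  have hE : MeasurableSet {t : ℝ | v < f t} := measurableSet_lt measurable_const hfm
  set E := {t : ℝ | v < f t} with hEdef
  set S := (E ×ˢ Eᶜ) ∪ (Eᶜ ×ˢ E) with hS
  have hSm : MeasurableSet S := (hE.prod hE.compl).union (hE.compl.prod hE)
  have hpt : ∀ p : ℝ × ℝ, |ψ (f p.1) v - ψ (f p.2) v| = Set.indicator S (fun _ => (1:ℝ)) p := by
    intro p
    rw [ψ_sub]
    have e1 : (p.1 ∈ E) = (v < f p.1) := rfl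
    have e2 : (p.2 ∈ E) = (v < f p.2) := rfl
    by_cases h1 : v < f p.1 <;> by_cases h2 : v < f p.2 <;>
      simp [Set.indicator_apply, hS, Set.mem_union, Set.mem_prod, Set.mem_compl_iff, hEdef,
        Set.mem_setOf_eq, h1, h2] <;> norm_num
  calc ∫ p, |ψ (f p.1) v - ψ (f p.2) v| ∂(νI.prod νI)
      = ∫ p, Set.indicator S (fun _ => (1:ℝ)) p ∂(νI.prod νI) :=
        integral_congr_ae (Eventually.of_forall hpt)
  _ = ((νI.prod νI) S).toReal := by
        rw [integral_indicator hSm, setIntegral_const, smul_eq_mul, mul_one, measureReal_def]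
  _ = 2 * ((νI E).toReal * (1 - (νI E).toReal)) := by
        have hdisj : Disjoint (E ×ˢ Eᶜ) (Eᶜ ×ˢ E) :=
          Set.disjoint_left.2 fun p hp hp2 => hp2.1 hp.1
        rw [hS, measure_union hdisj (hE.compl.prod hE), Measure.prod_prod, Measure.prod_prod]
        have hcompl : νI Eᶜ = 1 - νI E := by
          rw [measure_compl hE (measure_ne_top _ _), measure_univ]
        have hfin1 : νI E * νI Eᶜ ≠ ⊤ := ENNReal.mul_ne_top (measure_ne_top _ _) (measure_ne_top _ _)
        have hfin2 : νI Eᶜ * νI E ≠ ⊤ := ENNReal.mul_ne_top (measure_ne_top _ _) (measure_ne_top _ _)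
        rw [ENNReal.toReal_add hfin1 hfin2, ENNReal.toReal_mul, ENNReal.toReal_mul, hcompl,
          ENNReal.toReal_sub_of_le prob_le_one ENNReal.one_ne_top, ENNReal.toReal_one]
        ring

lemma key_nu (hfm : Measurable f) (hfi : Integrable f νI) :
    ∫ t, t * f t ∂νI ≤ (1/4) * ∫ s, (∫ t, |f s - f t| ∂νI) ∂νI := by
  have hpair := pair_abs_integrable hfm hfi
  have hTint := T_fubini_int hfm hfi
  have hDint := D_fubini_int hfm hfi
  have hiter : ∫ s, (∫ t, |f s - f t| ∂νI) ∂νI = ∫ p, |f p.1 - f p.2| ∂(νI.prod νI) :=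
    (integral_prod _ hpair).symm
  rw [hiter, T_repr hfm hfi, D_repr hfm hfi, ← integral_const_mul]
  refine integral_mono_ae hTint.integral_prod_right
    ((hDint.integral_prod_right).const_mul _) ?_
  filter_upwards with v
  rw [G_repr hfm v, D_section hfm v]
  have hb := bathtub (E := {t : ℝ | v < f t}) (measurableSet_lt measurable_const hfm)
  linarith [hb]

end Key3

section Bridge

lemma inner_euc1 (x y : Euc 1) : ⟪x, y⟫ = x 0 * y 0 := by
  simp [PiLp.inner_apply, RCLike.inner_apply, starRingEnd_apply, Fin.sum_univ_one]
  ring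

lemma key_ineq2 (v : Euc 1 → Euc 1) (hv : MemLp v 2 μI) :
    2 * ∫ x, ⟪x, v x⟫ ∂μI ≤ (1/2) * ∫ x, ∫ y, ‖v x - v y‖ ∂μI ∂μI := by
  have hv1 : Integrable v μI := hv.integrable (by norm_num)
  set f₁ : ℝ → ℝ := fun t => (v (φmap.symm t)) 0 with hf₁def
  have hsymm : MeasurePreserving (φmap.symm) νI μI := MeasurePreserving.symm φmap hres
  have hg : AEStronglyMeasurable (fun x : Euc 1 => (v x) 0) μI :=
    (ContinuousLinearMap.continuous
      (EuclideanSpace.proj (0 : Fin 1) : Euc 1 →L[ℝ] ℝ)).comp_aestronglyMeasurable hv.1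
  have hf₁m : AEStronglyMeasurable f₁ νI :=
    hg.comp_quasiMeasurePreserving hsymm.quasiMeasurePreserving
  have hgi : Integrable (fun x : Euc 1 => (v x) 0) μI := by
    refine hv1.norm.mono' hg ?_
    refine Eventually.of_forall fun x => ?_
    rw [Real.norm_eq_abs, ← norm_euc1]
  have hf₁i : Integrable f₁ νI := by
    rw [← MeasurePreserving.integrable_comp_emb hres φmap.measurableEmbedding]
    refine hgi.congr (Eventually.of_forall fun x => ?_)
    show (v x) 0 = f₁ (φmap x)
    rw [hf₁def]
    simp only [MeasurableEquiv.symm_apply_apply]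
  obtain ⟨f, hfm, hff₁⟩ : ∃ f : ℝ → ℝ, Measurable f ∧ f₁ =ᵐ[νI] f :=
    ⟨hf₁m.mk f₁, hf₁m.stronglyMeasurable_mk.measurable, hf₁m.ae_eq_mk⟩
  have hfi : Integrable f νI := hf₁i.congr hff₁
  have hsymm_app : ∀ x : Euc 1, φmap.symm (x 0) = x := by
    intro x
    have h : φmap x = x 0 := rfl
    rw [← h, MeasurableEquiv.symm_apply_apply]
  have hT : ∫ x, ⟪x, v x⟫ ∂μI = ∫ t, t * f t ∂νI := by
    have e0 : ∀ x : Euc 1, ⟪x, v x⟫ = (fun t => t * f₁ t) (x 0) := by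
      intro x
      simp only [hf₁def, hsymm_app x]
      exact inner_euc1 x (v x)
    calc ∫ x, ⟪x, v x⟫ ∂μI = ∫ x, (fun t => t * f₁ t) (x 0) ∂μI :=
          integral_congr_ae (Eventually.of_forall e0)
    _ = ∫ t, t * f₁ t ∂νI := integral_transfer (fun t => t * f₁ t)
    _ = ∫ t, t * f t ∂νI := integral_congr_ae (hff₁.mono fun t ht => by show t * f₁ t = t * f t; rw [ht])
  have hD : ∫ x, ∫ y, ‖v x - v y‖ ∂μI ∂μI = ∫ s, (∫ t, |f s - f t| ∂νI) ∂νI := by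
    have hnorm : ∀ x y : Euc 1, ‖v x - v y‖ = |f₁ (x 0) - f₁ (y 0)| := by
      intro x y
      rw [norm_euc1]
      have h : (v x - v y) 0 = (v x) 0 - (v y) 0 := rfl
      rw [h, hf₁def]
      simp only [hsymm_app x, hsymm_app y]
    have hinner : ∀ x : Euc 1, ∫ y, ‖v x - v y‖ ∂μI
        = (fun s => ∫ t, |f₁ s - f₁ t| ∂νI) (x 0) := by
      intro x
      calc ∫ y, ‖v x - v y‖ ∂μI = ∫ y, (fun t => |f₁ (x 0) - f₁ t|) (y 0) ∂μI := by
            apply integral_congr_ae; filter_upwards with y; exact hnorm x y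
      _ = ∫ t, |f₁ (x 0) - f₁ t| ∂νI := integral_transfer (fun t => |f₁ (x 0) - f₁ t|)
    calc ∫ x, ∫ y, ‖v x - v y‖ ∂μI ∂μI
        = ∫ x, (fun s => ∫ t, |f₁ s - f₁ t| ∂νI) (x 0) ∂μI := by
          apply integral_congr_ae; filter_upwards with x; exact hinner x
    _ = ∫ s, (∫ t, |f₁ s - f₁ t| ∂νI) ∂νI := integral_transfer (fun s => ∫ t, |f₁ s - f₁ t| ∂νI)
    _ = ∫ s, (∫ t, |f s - f t| ∂νI) ∂νI := by
          apply integral_congr_ae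
          filter_upwards [hff₁] with s hs
          apply integral_congr_ae
          filter_upwards [hff₁] with t ht
          rw [hs, ht]
  rw [hT, hD]
  have hk := key_nu hfm hfi
  linarith

end Bridge

lemma int_normsq : Integrable (fun x : Euc 1 => ‖x‖^2) μI :=
  (memLp_two_iff_integrable_sq_norm memL2_id.1).1 memL2_id

lemma int_normsq_v (v : Euc 1 → Euc 1) (hv : MemLp v 2 μI) :
    Integrable (fun x => ‖v x‖^2) μI :=
  (memLp_two_iff_integrable_sq_norm hv.1).1 hv

lemma expand_sq (v : Euc 1 → Euc 1) (hv : MemLp v 2 μI) :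
    ∫ x, ‖v x - x‖^2 ∂μI
      = ∫ x, ‖v x‖^2 ∂μI - 2 * ∫ x, ⟪x, v x⟫ ∂μI + ∫ x, ‖x‖^2 ∂μI := by
  have h1 := int_normsq_v v hv
  have h2 := inner_int v hv
  have h3 := int_normsq
  have h4 : Integrable (fun x : Euc 1 => ‖v x‖^2 - 2 * ⟪x, v x⟫) μI :=
    h1.sub (h2.const_mul (2:ℝ))
  have hpt : ∀ x : Euc 1, ‖v x - x‖^2 = ‖v x‖^2 - 2 * ⟪x, v x⟫ + ‖x‖^2 := by
    intro x
    rw [norm_sub_sq_real, real_inner_comm]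
  calc ∫ x, ‖v x - x‖^2 ∂μI
      = ∫ x, (‖v x‖^2 - 2 * ⟪x, v x⟫ + ‖x‖^2) ∂μI := by
        apply integral_congr_ae
        filter_upwards with x
        exact hpt x
  _ = ∫ x, (‖v x‖^2 - 2 * ⟪x, v x⟫) ∂μI + ∫ x, ‖x‖^2 ∂μI :=
        integral_add h4 h3
  _ = _ := by rw [integral_sub h1 (h2.const_mul (2:ℝ)), integral_const_mul]

lemma sonj_const (lam : ℝ) (c : Euc 1) :
    SONJ μI lam (fun _ => c) = ∫ x, ‖c - x‖^2 ∂μI := by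
  simp [SONJ]

lemma cohesive_of (lam : ℝ) (hlam : 1/2 ≤ lam) : Cohesive μI lam := by
  refine ⟨fun _ => 0, ⟨memLp_const 0, fun v hv => ?_⟩, 0, Eventually.of_forall fun _ => rfl⟩
  rw [sonj_const]
  have h0 : ∫ x, ‖(0 : Euc 1) - x‖^2 ∂μI = ∫ x, ‖x‖^2 ∂μI := by
    apply integral_congr_ae
    filter_upwards with x
    rw [zero_sub, norm_neg]
  rw [h0, SONJ, expand_sq v hv]
  have hD0 : 0 ≤ ∫ x, ∫ y, ‖v x - v y‖ ∂μI ∂μI :=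
    integral_nonneg fun x => integral_nonneg fun y => norm_nonneg _
  have hkey := key_ineq2 v hv
  have hsq : 0 ≤ ∫ x, ‖v x‖^2 ∂μI := integral_nonneg fun x => by positivity
  nlinarith [mul_le_mul_of_nonneg_right hlam hD0]

lemma not_cohesive (lam : ℝ) (h0 : 0 ≤ lam) (hl : lam < 1/2) : ¬ Cohesive μI lam := by
  rintro ⟨u, ⟨hu2, humin⟩, c, hc⟩
  set s : ℝ := 1 - 2 * lam with hs
  have hs0 : 0 < s := by rw [hs]; linarith
  have hvmem : MemLp (fun x : Euc 1 => s • x) 2 μI := by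
    have := memL2_id.const_smul (c := s) (𝕜 := ℝ)
    exact this
  have hval : SONJ μI lam u = ∫ x, ‖c - x‖^2 ∂μI := by
    rw [SONJ]
    have e1 : ∫ x, ‖u x - x‖^2 ∂μI = ∫ x, ‖c - x‖^2 ∂μI := by
      apply integral_congr_ae
      filter_upwards [hc] with x hx
      rw [hx]
    have e2 : ∫ x, ∫ y, ‖u x - u y‖ ∂μI ∂μI = 0 := by
      have h : (fun x => ∫ y, ‖u x - u y‖ ∂μI) =ᵐ[μI] fun _ => (0:ℝ) := by
        filter_upwards [hc] with x hx
        have h2 : (fun y => ‖u x - u y‖) =ᵐ[μI] fun _ => (0:ℝ) := by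
          filter_upwards [hc] with y hy
          rw [hx, hy, sub_self, norm_zero]
        rw [integral_congr_ae h2, integral_zero]
      rw [integral_congr_ae h, integral_zero]
    rw [e1, e2, mul_zero, add_zero]
  have hlow : (1:ℝ)/12 ≤ SONJ μI lam u := by
    rw [hval]
    have h2 : Integrable (fun x : Euc 1 => ⟪c, x⟫) μI := int_id.const_inner c
    have h4 : Integrable (fun x : Euc 1 => ‖c‖^2 - 2 * ⟪c, x⟫) μI :=
      (integrable_const _).sub (h2.const_mul (2:ℝ))
    have hexp : ∫ x, ‖c - x‖^2 ∂μI = ‖c‖^2 - 2 * ⟪c, ∫ x, x ∂μI⟫ + 1/12 := by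
      calc ∫ x, ‖c - x‖^2 ∂μI
          = ∫ x, (‖c‖^2 - 2 * ⟪c, x⟫ + ‖x‖^2) ∂μI := by
            apply integral_congr_ae
            filter_upwards with x
            rw [norm_sub_sq_real]
      _ = ∫ x, (‖c‖^2 - 2 * ⟪c, x⟫) ∂μI + ∫ x, ‖x‖^2 ∂μI :=
            integral_add h4 int_normsq
      _ = _ := by
            rw [integral_sub (integrable_const _) (h2.const_mul (2:ℝ)), integral_const_mul,
              integral_inner int_id, μI_normsq, integral_const, probReal_univ]
            simp
    rw [hexp, μI_center, inner_zero_right]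
    nlinarith [sq_nonneg ‖c‖]
  have hcomp : SONJ μI lam (fun x : Euc 1 => s • x) = (s-1)^2 * (1/12) + lam * (s * (1/3)) := by
    rw [SONJ]
    have e1 : ∫ x, ‖s • x - x‖^2 ∂μI = (s-1)^2 * (1/12) := by
      calc ∫ x, ‖s • x - x‖^2 ∂μI = ∫ x, (s-1)^2 * ‖x‖^2 ∂μI := by
            apply integral_congr_ae
            filter_upwards with x
            have hx : s • x - x = (s - 1) • x := by rw [sub_smul s 1 x, one_smul]
            rw [hx, norm_smul, mul_pow, Real.norm_eq_abs, sq_abs]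
      _ = (s-1)^2 * (1/12) := by rw [integral_const_mul, μI_normsq]
    have e2 : ∫ x, ∫ y, ‖s • x - s • y‖ ∂μI ∂μI = s * (1/3) := by
      have hpt : ∀ x y : Euc 1, ‖s • x - s • y‖ = s * ‖x - y‖ := by
        intro x y
        rw [← smul_sub, norm_smul, Real.norm_eq_abs, abs_of_pos hs0]
      calc ∫ x, ∫ y, ‖s • x - s • y‖ ∂μI ∂μI
          = ∫ x, s * ∫ y, ‖x - y‖ ∂μI ∂μI := by
            apply integral_congr_ae
            filter_upwards with x
            calc ∫ y, ‖s • x - s • y‖ ∂μI = ∫ y, s * ‖x - y‖ ∂μI := by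
                  apply integral_congr_ae
                  filter_upwards with y
                  exact hpt x y
            _ = s * ∫ y, ‖x - y‖ ∂μI := integral_const_mul _ _
      _ = s * ∫ x, ∫ y, ‖x - y‖ ∂μI ∂μI := integral_const_mul _ _
      _ = s * (1/3) := by rw [μI_dd]
    rw [e1, e2]
  have hle := humin _ hvmem
  rw [hcomp] at hle
  have hss : s = 1 - 2 * lam := hs
  nlinarith [hle, hlow, mul_pos hs0 hs0]


end S14

/-- **Proposition (interval).**  For `μ` the Lebesgue measure on `[-1/2, 1/2] ⊂ ℝ`,
`λ₁(μ) = 1/2`. -/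
theorem stmt14
    (μ : Measure (Euc 1))
    (hμ : μ = volume.restrict {x : Euc 1 | x 0 ∈ Set.Icc (-(1/2) : ℝ) (1/2)}) :
    lambda1 μ = 1 / 2 := by
  have hμI : μ = S14.μI := hμ
  subst hμI
  have hset : {lam : ℝ | 0 ≤ lam ∧ Cohesive S14.μI lam} = Set.Ici (1/2 : ℝ) := by
    ext lam
    simp only [Set.mem_setOf_eq, Set.mem_Ici]
    constructor
    · rintro ⟨h0, hcoh⟩
      by_contra h
      exact S14.not_cohesive lam h0 (lt_of_not_ge h) hcoh
    · intro h
      exact ⟨le_trans (by norm_num) h, S14.cohesive_of lam h⟩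
  rw [lambda1, hset, csInf_Ici]
end
end

section
/- (W₁-stability of the minimizer) Let λ > 0, M ∈ (0,∞), and let μ, μ̃ be Borel probability measures on ℝ^d with supp μ, supp μ̃ ⊂ B_M(0). Then for every 1-optimal transport plan π from μ to μ̃, writing its disintegration over the first coordinate as dπ(x,x̃) = dν(x̃ | x) dμ(x), one has ∫ | u_{μ,λ}(x) − ∫ u_{μ̃,λ}(x̃) dν(x̃ | x) |² dμ(x) ≤ 16 M · W₁(μ, μ̃). -/
open MeasureTheory Filter Topology ProbabilityTheory
open scoped ENNReal NNReal symmDiff Classical RealInnerProductSpace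

noncomputable section

/-- The `1`-Wasserstein distance (in `ℝ≥0∞`) between two measures on `ℝ^d`, as an
infimum over couplings. -/
def W1dist {d : ℕ} (μ ν : Measure (Euc d)) : ℝ≥0∞ :=
  ⨅ (π : Measure (Euc d × Euc d)) (_ : π.fst = μ ∧ π.snd = ν), ∫⁻ p, edist p.1 p.2 ∂π

set_option maxHeartbeats 1000000

namespace SONProof

variable {d : ℕ}

lemma norm_le_of_sq_le {x y : ℝ} (hx : 0 ≤ x) (hy : 0 ≤ y) (h : x^2 ≤ y^2) : x ≤ y := by
  nlinarith

/-- Projection onto the closed ball of radius `M`. -/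
def proj (M : ℝ) (z : Euc d) : Euc d := if ‖z‖ ≤ M then z else (M / ‖z‖) • z

lemma proj_meas (M : ℝ) : Measurable (proj (d := d) M) := by
  unfold proj
  exact Measurable.ite (measurableSet_le measurable_norm measurable_const)
    measurable_id ((measurable_const.div measurable_norm).smul measurable_id)

lemma norm_proj_le {M : ℝ} (hM : 0 ≤ M) (z : Euc d) : ‖proj M z‖ ≤ M := by
  unfold proj; split_ifs with h
  · exact h
  · push_neg at h
    have hz : 0 < ‖z‖ := lt_of_le_of_lt hM h
    rw [norm_smul, Real.norm_eq_abs, abs_of_nonneg (div_nonneg hM hz.le),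
      div_mul_cancel₀ _ hz.ne']

lemma proj_contract {M : ℝ} (hM : 0 ≤ M) {a : Euc d} (ha : ‖a‖ ≤ M) (z : Euc d) :
    ‖proj M z - a‖ ≤ ‖z - a‖ := by
  unfold proj
  split_ifs with h
  · exact le_refl _
  · push_neg at h
    have hz : 0 < ‖z‖ := lt_of_le_of_lt hM h
    set t : ℝ := M / ‖z‖ with ht
    have ht0 : 0 ≤ t := div_nonneg hM hz.le
    have htz : t * ‖z‖ = M := div_mul_cancel₀ _ hz.ne'
    have ht1 : t ≤ 1 := by rw [ht, div_le_one hz]; exact h.le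
    apply norm_le_of_sq_le (norm_nonneg _) (norm_nonneg _)
    have e1 : ‖t • z - a‖^2 = t^2*‖z‖^2 - 2*(t*⟪z,a⟫) + ‖a‖^2 := by
      rw [norm_sub_sq_real, real_inner_smul_left, norm_smul, Real.norm_eq_abs,
        abs_of_nonneg ht0, mul_pow]
    have e2 : ‖z - a‖^2 = ‖z‖^2 - 2*⟪z,a⟫ + ‖a‖^2 := norm_sub_sq_real z a
    have hia : ⟪z,a⟫ ≤ t * ‖z‖^2 := by
      have h1 : ⟪z,a⟫ ≤ ‖z‖ * ‖a‖ := real_inner_le_norm z a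
      have h2 : ‖z‖ * ‖a‖ ≤ ‖z‖ * M := mul_le_mul_of_nonneg_left ha (norm_nonneg z)
      nlinarith [htz]
    rw [e1, e2]
    nlinarith [mul_nonneg (sub_nonneg.2 ht1) (sub_nonneg.2 hia), sq_nonneg (‖z‖*(1-t))]

lemma proj_lip {M : ℝ} (hM : 0 ≤ M) (z w : Euc d) :
    ‖proj M z - proj M w‖ ≤ ‖z - w‖ := by
  rcases le_or_gt ‖z‖ M with hz | hz
  · rcases le_or_gt ‖w‖ M with hw | hw
    · unfold proj; rw [if_pos hz, if_pos hw]
    · have hpz : proj M z = z := if_pos hz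
      rw [hpz, norm_sub_rev, norm_sub_rev z w]
      exact proj_contract hM hz w
  · rcases le_or_gt ‖w‖ M with hw | hw
    · have hpw : proj M w = w := if_pos hw
      rw [hpw]
      exact proj_contract hM hw z
    · have hz0 : 0 < ‖z‖ := lt_of_le_of_lt hM hz
      have hw0 : 0 < ‖w‖ := lt_of_le_of_lt hM hw
      have hpz : proj M z = (M/‖z‖) • z := if_neg (not_le.2 hz)
      have hpw : proj M w = (M/‖w‖) • w := if_neg (not_le.2 hw)
      rw [hpz, hpw]
      set s : ℝ := M / ‖z‖ with hs
      set t : ℝ := M / ‖w‖ with htd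
      have hs0 : 0 ≤ s := div_nonneg hM hz0.le
      have ht0 : 0 ≤ t := div_nonneg hM hw0.le
      have hsz : s * ‖z‖ = M := div_mul_cancel₀ _ hz0.ne'
      have htw : t * ‖w‖ = M := div_mul_cancel₀ _ hw0.ne'
      have hs1 : s ≤ 1 := by rw [hs, div_le_one hz0]; exact hz.le
      have ht1 : t ≤ 1 := by rw [htd, div_le_one hw0]; exact hw.le
      apply norm_le_of_sq_le (norm_nonneg _) (norm_nonneg _)
      have e1 : ‖s • z - t • w‖^2 = s^2*‖z‖^2 - 2*(s*(t*⟪z,w⟫)) + t^2*‖w‖^2 := by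
        rw [norm_sub_sq_real, real_inner_smul_left, real_inner_smul_right, norm_smul,
          norm_smul, Real.norm_eq_abs, Real.norm_eq_abs, abs_of_nonneg hs0,
          abs_of_nonneg ht0, mul_pow, mul_pow]
      have e2 : ‖z - w‖^2 = ‖z‖^2 - 2*⟪z,w⟫ + ‖w‖^2 := norm_sub_sq_real z w
      have hM2a : s^2*‖z‖^2 = M^2 := by
        calc s^2*‖z‖^2 = (s*‖z‖)^2 := by ring
        _ = M^2 := by rw [hsz]
      have hM2b : t^2*‖w‖^2 = M^2 := by
        calc t^2*‖w‖^2 = (t*‖w‖)^2 := by ring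
        _ = M^2 := by rw [htw]
      have hM2 : (s*t)*(‖z‖*‖w‖) = M*M := by
        calc (s*t)*(‖z‖*‖w‖) = (s*‖z‖)*(t*‖w‖) := by ring
        _ = M*M := by rw [hsz, htw]
      have hc : ⟪z,w⟫ ≤ ‖z‖*‖w‖ := real_inner_le_norm z w
      have hst1 : s*t ≤ 1 := by nlinarith
      have key : (1 - s*t) * (‖z‖*‖w‖ - ⟪z,w⟫) ≥ 0 :=
        mul_nonneg (by linarith) (by linarith)
      rw [e1, e2, hM2a, hM2b]
      nlinarith [key, hM2, sq_nonneg (‖z‖ - ‖w‖)]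

lemma bdd_int {X : Type*} [MeasurableSpace X] {ν : Measure X} [IsFiniteMeasure ν]
    {E : Type*} [NormedAddCommGroup E] {f : X → E}
    (hm : AEStronglyMeasurable f ν) {C : ℝ} (hb : ∀ᵐ x ∂ν, ‖f x‖ ≤ C) : Integrable f ν :=
  memLp_one_iff_integrable.mp (MemLp.of_bound hm C hb)

lemma sq_int {X : Type*} [MeasurableSpace X] {ν : Measure X}
    {f : X → Euc d} (hf : MemLp f 2 ν) : Integrable (fun x => ‖f x‖^2) ν :=
  hf.norm.integrable_sq

lemma measurePreserving_fst' {X : Type*} [MeasurableSpace X] (μ ν : Measure X)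
    [SFinite μ] [IsProbabilityMeasure ν] : MeasurePreserving Prod.fst (μ.prod ν) μ :=
  ⟨measurable_fst, by simp [Measure.map_fst_prod]⟩

lemma measurePreserving_snd' {X : Type*} [MeasurableSpace X] (μ ν : Measure X)
    [IsProbabilityMeasure μ] [SFinite ν] : MeasurePreserving Prod.snd (μ.prod ν) ν :=
  ⟨measurable_snd, by simp [Measure.map_snd_prod]⟩

lemma jensen_norm {X : Type*} [MeasurableSpace X] {ν : Measure X} [IsProbabilityMeasure ν]
    {f : X → Euc d} (hf : Integrable f ν) (c : Euc d) :
    ‖(∫ x, f x ∂ν) - c‖ ≤ ∫ x, ‖f x - c‖ ∂ν := by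
  have h : ∫ x, (f x - c) ∂ν = (∫ x, f x ∂ν) - c := by
    rw [integral_sub hf (integrable_const c), integral_const]; simp
  rw [← h]
  exact norm_integral_le_integral_norm _

lemma jensen_norm' {X : Type*} [MeasurableSpace X] {ν : Measure X} [IsProbabilityMeasure ν]
    {f : X → Euc d} (hf : Integrable f ν) (c : Euc d) :
    ‖c - ∫ x, f x ∂ν‖ ≤ ∫ x, ‖c - f x‖ ∂ν := by
  rw [norm_sub_rev]
  refine (jensen_norm hf c).trans (le_of_eq ?_)
  congr 1; funext x; rw [norm_sub_rev]

lemma jensen_sq {X : Type*} [MeasurableSpace X] {ν : Measure X} [IsProbabilityMeasure ν]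
    {f : X → ℝ} (hf : Integrable f ν) (hf2 : Integrable (fun x => f x ^ 2) ν) :
    (∫ x, f x ∂ν) ^ 2 ≤ ∫ x, f x ^ 2 ∂ν := by
  set m := ∫ x, f x ∂ν with hm
  have h0 : 0 ≤ ∫ x, (f x - m)^2 ∂ν := integral_nonneg fun x => sq_nonneg _
  have he : ∫ x, (f x - m)^2 ∂ν = (∫ x, f x ^2 ∂ν) - 2*m*m + m^2 := by
    have hfe : (fun x => (f x - m)^2) = fun x => (f x^2 - (2*m)*f x) + m^2 := by
      funext x; ring
    have hint1 : Integrable (fun x => f x^2 - (2*m)*f x) ν := hf2.sub (hf.const_mul (2*m))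
    rw [hfe, integral_add hint1 (integrable_const (m^2)),
      integral_sub hf2 (hf.const_mul (2*m)), integral_const_mul, integral_const]
    simp [← hm]
  nlinarith [h0, he]

section SONJlemmas

variable {μ : Measure (Euc d)} [IsProbabilityMeasure μ] {lam M : ℝ}

lemma pair_int {u : Euc d → Euc d} (hu : Integrable u μ) :
    Integrable (fun p : Euc d × Euc d => ‖u p.1 - u p.2‖) (μ.prod μ) := by
  have h1 : Integrable (u ∘ Prod.fst) (μ.prod μ) :=
    ((measurePreserving_fst' μ μ).integrable_comp hu.aestronglyMeasurable).mpr hu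
  have h2 : Integrable (u ∘ Prod.snd) (μ.prod μ) :=
    ((measurePreserving_snd' μ μ).integrable_comp hu.aestronglyMeasurable).mpr hu
  exact (h1.sub h2).norm

lemma pair_eq {u : Euc d → Euc d} (hu : Integrable u μ) :
    ∫ x, ∫ y, ‖u x - u y‖ ∂μ ∂μ = ∫ p, ‖u p.1 - u p.2‖ ∂(μ.prod μ) :=
  integral_integral (f := fun x y => ‖u x - u y‖) (pair_int hu)

lemma SONJ_congr {u v : Euc d → Euc d} (h : u =ᵐ[μ] v) : SONJ μ lam u = SONJ μ lam v := by
  unfold SONJ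
  congr 1
  · exact integral_congr_ae (h.mono fun x hx => by simp [hx])
  · congr 1
    apply integral_congr_ae
    filter_upwards [h] with x hx
    apply integral_congr_ae
    filter_upwards [h] with y hy
    rw [hx, hy]

lemma para (p q : Euc d) :
    ‖(2⁻¹:ℝ) • (p + q)‖^2 = 2⁻¹*‖p‖^2 + 2⁻¹*‖q‖^2 - 4⁻¹*‖p - q‖^2 := by
  have habs : |(2⁻¹:ℝ)| = 2⁻¹ := abs_of_pos (by norm_num)
  rw [norm_smul, Real.norm_eq_abs, habs, mul_pow, norm_add_sq_real, norm_sub_sq_real]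
  ring

lemma strong_convexity (hlam : 0 ≤ lam) (hM : 0 ≤ M) (hμb : ∀ᵐ x ∂μ, ‖x‖ ≤ M)
    {u v : Euc d → Euc d} (hu : IsSONMin μ lam u) (hv : MemLp v 2 μ) :
    ∫ x, ‖u x - v x‖^2 ∂μ ≤ 2*(SONJ μ lam v - SONJ μ lam u) := by
  have hid : MemLp (fun x : Euc d => x) 2 μ := MemLp.of_bound aestronglyMeasurable_id M hμb
  have hu2 := hu.1
  set m : Euc d → Euc d := fun x => (2⁻¹ : ℝ) • (u x + v x) with hmd
  have hm : MemLp m 2 μ := (hu2.add hv).const_smul (2⁻¹ : ℝ)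
  have hiu : Integrable (fun x => ‖u x - x‖^2) μ := sq_int (hu2.sub hid)
  have hiv : Integrable (fun x => ‖v x - x‖^2) μ := sq_int (hv.sub hid)
  have hiuv : Integrable (fun x => ‖u x - v x‖^2) μ := sq_int (hu2.sub hv)
  have hu1 : Integrable u μ := hu2.integrable one_le_two
  have hv1 : Integrable v μ := hv.integrable one_le_two
  have hm1 : Integrable m μ := hm.integrable one_le_two
  have hfid : ∫ x, ‖m x - x‖^2 ∂μ
      = 2⁻¹*∫ x, ‖u x - x‖^2 ∂μ + 2⁻¹*∫ x, ‖v x - x‖^2 ∂μ - 4⁻¹*∫ x, ‖u x - v x‖^2 ∂μ := by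
    have hfidpt : ∀ x : Euc d, ‖m x - x‖^2
        = 2⁻¹*‖u x - x‖^2 + 2⁻¹*‖v x - x‖^2 - 4⁻¹*‖u x - v x‖^2 := by
      intro x
      have hmx : m x - x = (2⁻¹ : ℝ) • ((u x - x) + (v x - x)) := by
        simp only [hmd]; module
      have hpq : u x - v x = (u x - x) - (v x - x) := by abel
      rw [hmx, hpq, para]
    calc ∫ x, ‖m x - x‖^2 ∂μ
        = ∫ x, (2⁻¹*‖u x - x‖^2 + 2⁻¹*‖v x - x‖^2 - 4⁻¹*‖u x - v x‖^2) ∂μ :=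
          integral_congr_ae (ae_of_all _ hfidpt)
      _ = _ := by
          have i1 : Integrable (fun x => 2⁻¹*‖u x - x‖^2 + 2⁻¹*‖v x - x‖^2) μ :=
            (hiu.const_mul (2⁻¹:ℝ)).add (hiv.const_mul (2⁻¹:ℝ))
          rw [integral_sub i1 (hiuv.const_mul (4⁻¹:ℝ)),
            integral_add (hiu.const_mul (2⁻¹:ℝ)) (hiv.const_mul (2⁻¹:ℝ)), integral_const_mul,
            integral_const_mul, integral_const_mul]
  have hpair : ∫ x, ∫ y, ‖m x - m y‖ ∂μ ∂μ
      ≤ 2⁻¹ * ∫ x, ∫ y, ‖u x - u y‖ ∂μ ∂μ + 2⁻¹ * ∫ x, ∫ y, ‖v x - v y‖ ∂μ ∂μ := by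
    rw [pair_eq hm1, pair_eq hu1, pair_eq hv1]
    have hle : ∀ p : Euc d × Euc d,
        ‖m p.1 - m p.2‖ ≤ 2⁻¹*‖u p.1 - u p.2‖ + 2⁻¹*‖v p.1 - v p.2‖ := by
      intro p
      have hmx : m p.1 - m p.2 = (2⁻¹:ℝ) • ((u p.1 - u p.2) + (v p.1 - v p.2)) := by
        simp only [hmd]; module
      rw [hmx, norm_smul, Real.norm_eq_abs, abs_of_pos (by norm_num : (0:ℝ) < 2⁻¹)]
      calc 2⁻¹ * ‖(u p.1 - u p.2) + (v p.1 - v p.2)‖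
          ≤ 2⁻¹ * (‖u p.1 - u p.2‖ + ‖v p.1 - v p.2‖) := by
            have := norm_add_le (u p.1 - u p.2) (v p.1 - v p.2)
            linarith
        _ = 2⁻¹*‖u p.1 - u p.2‖ + 2⁻¹*‖v p.1 - v p.2‖ := by ring
    calc ∫ p, ‖m p.1 - m p.2‖ ∂(μ.prod μ)
        ≤ ∫ p, (2⁻¹*‖u p.1 - u p.2‖ + 2⁻¹*‖v p.1 - v p.2‖) ∂(μ.prod μ) :=
          integral_mono_of_nonneg (ae_of_all _ fun p => norm_nonneg _)
            (((pair_int hu1).const_mul _).add ((pair_int hv1).const_mul _))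
            (ae_of_all _ hle)
      _ = _ := by
          rw [integral_add (((pair_int hu1)).const_mul (2⁻¹:ℝ)) ((pair_int hv1).const_mul (2⁻¹:ℝ)),
            integral_const_mul, integral_const_mul]
  have hmin := hu.2 m hm
  have hlp := mul_le_mul_of_nonneg_left hpair hlam
  unfold SONJ at hmin ⊢
  nlinarith [hfid, hlp, hmin]

lemma minimizer_bounded (hlam : 0 ≤ lam) (hM : 0 ≤ M) (hμb : ∀ᵐ x ∂μ, ‖x‖ ≤ M)
    {u : Euc d → Euc d} (hu : IsSONMin μ lam u) : ∀ᵐ x ∂μ, ‖u x‖ ≤ M := by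
  have hid : MemLp (fun x : Euc d => x) 2 μ := MemLp.of_bound aestronglyMeasurable_id M hμb
  set v : Euc d → Euc d := fun x => proj M (u x) with hvd
  have hvm : AEStronglyMeasurable v μ := by
    obtain ⟨g, hg, hug⟩ := hu.1.aestronglyMeasurable
    refine ⟨fun x => proj M (g x), ((proj_meas M).comp hg.measurable).stronglyMeasurable, ?_⟩
    filter_upwards [hug] with x hx
    simp only [hvd, hx]
  have hv : MemLp v 2 μ := MemLp.of_bound hvm M (ae_of_all _ fun x => norm_proj_le hM _)
  have hu1 : Integrable u μ := hu.1.integrable one_le_two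
  have hv1 : Integrable v μ := hv.integrable one_le_two
  have hsc := strong_convexity hlam hM hμb hu hv
  have hvle : SONJ μ lam v ≤ SONJ μ lam u := by
    have hfid : ∫ x, ‖v x - x‖^2 ∂μ ≤ ∫ x, ‖u x - x‖^2 ∂μ := by
      apply integral_mono_of_nonneg (ae_of_all _ fun x => sq_nonneg _) (sq_int (hu.1.sub hid))
      filter_upwards [hμb] with x hx
      have h1 := proj_contract hM hx (u x)
      exact pow_le_pow_left₀ (norm_nonneg _) h1 2
    have hpw : ∫ x, ∫ y, ‖v x - v y‖ ∂μ ∂μ ≤ ∫ x, ∫ y, ‖u x - u y‖ ∂μ ∂μ := by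
      rw [pair_eq hv1, pair_eq hu1]
      exact integral_mono_of_nonneg (ae_of_all _ fun p => norm_nonneg _) (pair_int hu1)
        (ae_of_all _ fun p => proj_lip hM _ _)
    have hlp := mul_le_mul_of_nonneg_left hpw hlam
    unfold SONJ
    linarith
  have hDnn : 0 ≤ ∫ x, ‖u x - v x‖^2 ∂μ := integral_nonneg fun x => sq_nonneg _
  have hD0 : ∫ x, ‖u x - v x‖^2 ∂μ = 0 := le_antisymm (by linarith) hDnn
  have hae := (integral_eq_zero_iff_of_nonneg (fun x => sq_nonneg _)
    (sq_int (hu.1.sub hv))).mp hD0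
  filter_upwards [hae] with x hx
  have hx0 : ‖u x - v x‖^2 = 0 := hx
  have h2 : u x = v x := by
    have h3 : ‖u x - v x‖ = 0 := by nlinarith [norm_nonneg (u x - v x)]
    exact sub_eq_zero.mp (norm_eq_zero.mp h3)
  rw [h2]
  exact norm_proj_le hM _

end SONJlemmas

section Transfer

variable {lam M : ℝ}

lemma integral_le_of_le {X : Type*} [MeasurableSpace X] {ν : Measure X}
    [IsProbabilityMeasure ν] {f : X → ℝ} {C : ℝ} (hfi : Integrable f ν)
    (hb : ∀ x, f x ≤ C) : ∫ x, f x ∂ν ≤ C := by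
  calc ∫ x, f x ∂ν ≤ ∫ _x, C ∂ν := integral_mono hfi (integrable_const C) hb
    _ = C := by simp

lemma norm_int_le {X : Type*} [MeasurableSpace X] {ν : Measure X}
    [IsProbabilityMeasure ν] {f : X → Euc d} {C : ℝ} (hfi : Integrable f ν)
    (hb : ∀ x, ‖f x‖ ≤ C) : ‖∫ x, f x ∂ν‖ ≤ C :=
  (norm_integral_le_integral_norm _).trans (integral_le_of_le hfi.norm hb)

lemma marg (ρ : Measure (Euc d × Euc d)) [IsFiniteMeasure ρ] {F : Euc d × Euc d → ℝ}
    (hF : Integrable F ρ) :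
    ∫ x, ∫ y, F (x, y) ∂ρ.condKernel x ∂ρ.fst = ∫ p, F p ∂ρ := by
  conv_rhs => rw [← ρ.disintegrate ρ.condKernel]
  rw [Measure.integral_compProd (by rwa [ρ.disintegrate ρ.condKernel])]

lemma marg_snd {β : Measure (Euc d)} (ρ : Measure (Euc d × Euc d)) [IsFiniteMeasure ρ]
    (hsnd : ρ.snd = β) {h : Euc d → ℝ} (hm : AEStronglyMeasurable h β) :
    ∫ p, h p.2 ∂ρ = ∫ y, h y ∂β := by
  have hmap : ρ.map Prod.snd = β := hsnd
  rw [← hmap] at hm ⊢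
  exact (integral_map measurable_snd.aemeasurable hm).symm

lemma marg2 {β : Measure (Euc d)} (ρ : Measure (Euc d × Euc d)) [IsFiniteMeasure ρ]
    (hsnd : ρ.snd = β) {h : Euc d → ℝ} (hm : StronglyMeasurable h) {C : ℝ}
    (hb : ∀ y, |h y| ≤ C) :
    ∫ x, ∫ y, h y ∂ρ.condKernel x ∂ρ.fst = ∫ y, h y ∂β := by
  have hF : Integrable (fun p : Euc d × Euc d => h p.2) ρ :=
    bdd_int (hm.comp_measurable measurable_snd).aestronglyMeasurable
      (ae_of_all _ fun p => by simpa using hb p.2)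
  rw [marg ρ (F := fun p => h p.2) hF, marg_snd ρ hsnd hm.aestronglyMeasurable]

lemma transfer (hlam : 0 ≤ lam) (hM : 0 ≤ M)
    (α β : Measure (Euc d)) [IsProbabilityMeasure α] [IsProbabilityMeasure β]
    (ρ : Measure (Euc d × Euc d)) [IsProbabilityMeasure ρ]
    (hfst : ρ.fst = α) (hsnd : ρ.snd = β)
    (hρ1 : ∀ᵐ p ∂ρ, ‖p.1‖ ≤ M) (hρ2 : ∀ᵐ p ∂ρ, ‖p.2‖ ≤ M)
    (hαb : ∀ᵐ x ∂α, ‖x‖ ≤ M)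
    {g : Euc d → Euc d} (hg : Measurable g) (hgb : ∀ y, ‖g y‖ ≤ M) :
    SONJ α lam (fun x => ∫ y, g y ∂ρ.condKernel x)
      ≤ SONJ β lam g + 4*M*∫ p, ‖p.1 - p.2‖ ∂ρ := by
  set κ := ρ.condKernel with hκ
  set v : Euc d → Euc d := fun x => ∫ y, g y ∂κ x with hv
  have hgsm : StronglyMeasurable g := hg.stronglyMeasurable
  have hgint : ∀ (ν : Measure (Euc d)), IsFiniteMeasure ν → Integrable g ν := fun ν hν =>
    bdd_int hgsm.aestronglyMeasurable (ae_of_all _ hgb)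
  have hvsm : StronglyMeasurable v :=
    StronglyMeasurable.integral_kernel_prod_right' (κ := κ)
      (hgsm.comp_measurable measurable_snd)
  have hvb : ∀ x, ‖v x‖ ≤ M := fun x =>
    norm_int_le (hgint _ inferInstance) hgb
  -- Fidelity part
  set ψ : Euc d → ℝ := fun x => ∫ y, ‖g y - x‖^2 ∂κ x with hψ
  have hψsm : StronglyMeasurable ψ :=
    StronglyMeasurable.integral_kernel_prod_right' (κ := κ)
      (((hgsm.comp_measurable measurable_snd).sub
        (stronglyMeasurable_id.comp_measurable measurable_fst)).norm.pow 2)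
  have hψnn : ∀ x, 0 ≤ ψ x := fun x => integral_nonneg fun y => sq_nonneg _
  have hgx_int : ∀ (x c : Euc d), Integrable (fun y => ‖g y - c‖) (κ x) := by
    intro x c
    apply bdd_int (C := M + ‖c‖) ((hgsm.sub stronglyMeasurable_const).norm).aestronglyMeasurable
    refine ae_of_all _ fun y => ?_
    rw [Real.norm_eq_abs, abs_of_nonneg (norm_nonneg _)]
    exact (norm_sub_le _ _).trans (by linarith [hgb y])
  have hgx2_int : ∀ (x c : Euc d), Integrable (fun y => ‖g y - c‖^2) (κ x) := by
    intro x c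
    apply bdd_int (C := (M + ‖c‖)^2)
      (((hgsm.sub stronglyMeasurable_const).norm.pow 2)).aestronglyMeasurable
    refine ae_of_all _ fun y => ?_
    have h1 : ‖g y - c‖ ≤ M + ‖c‖ := (norm_sub_le _ _).trans (by linarith [hgb y])
    have h2 : (0:ℝ) ≤ M + ‖c‖ := by positivity
    show ‖‖g y - c‖ ^ 2‖ ≤ (M + ‖c‖) ^ 2
    rw [Real.norm_eq_abs, abs_of_nonneg (sq_nonneg _)]
    nlinarith [norm_nonneg (g y - c)]
  have step1 : ∀ x, ‖v x - x‖^2 ≤ ψ x := by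
    intro x
    have h1 : ‖v x - x‖ ≤ ∫ y, ‖g y - x‖ ∂κ x := jensen_norm (hgint _ inferInstance) x
    have h2 : (∫ y, ‖g y - x‖ ∂κ x)^2 ≤ ψ x := jensen_sq (hgx_int x x) (hgx2_int x x)
    exact (pow_le_pow_left₀ (norm_nonneg _) h1 2).trans h2
  have hψb : ∀ᵐ x ∂α, |ψ x| ≤ 4*M^2 := by
    filter_upwards [hαb] with x hx
    rw [abs_of_nonneg (hψnn x)]
    apply integral_le_of_le (hgx2_int x x)
    intro y
    have h1 : ‖g y - x‖ ≤ 2*M := (norm_sub_le _ _).trans (by linarith [hgb y])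
    nlinarith [norm_nonneg (g y - x)]
  have step2 : ∫ x, ‖v x - x‖^2 ∂α ≤ ∫ x, ψ x ∂α :=
    integral_mono_of_nonneg (ae_of_all _ fun x => sq_nonneg _)
      (bdd_int (C := 4*M^2) hψsm.aestronglyMeasurable (by
        filter_upwards [hψb] with x hx
        show ‖ψ x‖ ≤ 4*M^2
        rwa [Real.norm_eq_abs])) (ae_of_all _ step1)
  have hFi : Integrable (fun p : Euc d × Euc d => ‖g p.2 - p.1‖^2) ρ := by
    apply bdd_int (C := 4*M^2) (((hgsm.comp_measurable measurable_snd).sub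
      (stronglyMeasurable_id.comp_measurable measurable_fst)).norm.pow 2).aestronglyMeasurable
    filter_upwards [hρ1, hρ2] with p h1 h2
    have h3 : ‖g p.2 - p.1‖ ≤ 2*M := (norm_sub_le _ _).trans (by linarith [hgb p.2])
    show ‖‖g p.2 - p.1‖ ^ 2‖ ≤ 4*M^2
    rw [Real.norm_eq_abs, abs_of_nonneg (sq_nonneg _)]
    nlinarith [norm_nonneg (g p.2 - p.1)]
  have step3 : ∫ x, ψ x ∂α = ∫ p, ‖g p.2 - p.1‖^2 ∂ρ := by
    rw [← hfst]
    exact marg ρ (F := fun p => ‖g p.2 - p.1‖^2) hFi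
  have hAint : Integrable (fun p : Euc d × Euc d => ‖g p.2 - p.2‖^2) ρ := by
    apply bdd_int (C := 4*M^2) (((hgsm.comp_measurable measurable_snd).sub
      (stronglyMeasurable_id.comp_measurable measurable_snd)).norm.pow 2).aestronglyMeasurable
    filter_upwards [hρ2] with p h2
    have h3 : ‖g p.2 - p.2‖ ≤ 2*M := (norm_sub_le _ _).trans (by linarith [hgb p.2])
    show ‖‖g p.2 - p.2‖ ^ 2‖ ≤ 4*M^2
    rw [Real.norm_eq_abs, abs_of_nonneg (sq_nonneg _)]
    nlinarith [norm_nonneg (g p.2 - p.2)]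
  have hBint : Integrable (fun p : Euc d × Euc d => ‖p.1 - p.2‖) ρ := by
    apply bdd_int ((stronglyMeasurable_id.comp_measurable measurable_fst).sub
      (stronglyMeasurable_id.comp_measurable measurable_snd)).norm.aestronglyMeasurable
      (C := 2*M)
    filter_upwards [hρ1, hρ2] with p h1 h2
    show ‖‖p.1 - p.2‖‖ ≤ 2*M
    rw [Real.norm_eq_abs, abs_of_nonneg (norm_nonneg _)]
    exact (norm_sub_le _ _).trans (by linarith)
  have step4 : ∫ p, ‖g p.2 - p.1‖^2 ∂ρ
      ≤ ∫ p, (‖g p.2 - p.2‖^2 + (4*M)*‖p.1 - p.2‖) ∂ρ := by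
    apply integral_mono_of_nonneg (ae_of_all _ fun p => sq_nonneg _)
      (hAint.add (hBint.const_mul (4*M)))
    filter_upwards [hρ1, hρ2] with p h1 h2
    show ‖g p.2 - p.1‖ ^ 2 ≤ ‖g p.2 - p.2‖^2 + (4*M)*‖p.1 - p.2‖
    have hkey : ‖g p.2 - p.1‖ ≤ ‖g p.2 - p.2‖ + ‖p.1 - p.2‖ := by
      have he : g p.2 - p.1 = (g p.2 - p.2) + (p.2 - p.1) := by abel
      rw [he, norm_sub_rev p.1 p.2]
      exact norm_add_le _ _
    have ha : ‖g p.2 - p.1‖ ≤ 2*M := (norm_sub_le _ _).trans (by linarith [hgb p.2])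
    have hb2 : ‖g p.2 - p.2‖ ≤ 2*M := (norm_sub_le _ _).trans (by linarith [hgb p.2])
    nlinarith [norm_nonneg (p.1 - p.2), norm_nonneg (g p.2 - p.1), norm_nonneg (g p.2 - p.2)]
  have step5 : ∫ p, (‖g p.2 - p.2‖^2 + (4*M)*‖p.1 - p.2‖) ∂ρ
      = ∫ y, ‖g y - y‖^2 ∂β + 4*M*∫ p, ‖p.1 - p.2‖ ∂ρ := by
    rw [integral_add hAint (hBint.const_mul (4*M)), integral_const_mul,
      marg_snd ρ hsnd (h := fun y => ‖g y - y‖^2)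
        ((hgsm.sub stronglyMeasurable_id).norm.pow 2).aestronglyMeasurable]
  have hfidelity : ∫ x, ‖v x - x‖^2 ∂α
      ≤ ∫ y, ‖g y - y‖^2 ∂β + 4*M*∫ p, ‖p.1 - p.2‖ ∂ρ := by
    rw [← step5]; rw [step3] at step2; linarith [step4, step2]
  -- Pairwise part
  set H : Euc d → ℝ := fun z => ∫ y, ‖g z - g y‖ ∂β with hH
  have hggsm : StronglyMeasurable (fun p : Euc d × Euc d => ‖g p.1 - g p.2‖) :=
    ((hgsm.comp_measurable measurable_fst).sub (hgsm.comp_measurable measurable_snd)).norm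
  have hHsm : StronglyMeasurable H :=
    StronglyMeasurable.integral_prod_right' (ν := β) hggsm
  have hgg_bdd : ∀ z y : Euc d, ‖g z - g y‖ ≤ 2*M := fun z y =>
    (norm_sub_le _ _).trans (by linarith [hgb z, hgb y])
  have hgg_int : ∀ (z : Euc d) (ν : Measure (Euc d)), IsFiniteMeasure ν →
      Integrable (fun y => ‖g z - g y‖) ν := fun z ν hν =>
    bdd_int ((stronglyMeasurable_const.sub hgsm).norm).aestronglyMeasurable
      (ae_of_all _ fun y => by
        rw [Real.norm_eq_abs, abs_of_nonneg (norm_nonneg _)]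
        exact hgg_bdd z y)
  have hHnn : ∀ z, 0 ≤ H z := fun z => integral_nonneg fun y => norm_nonneg _
  have hHb : ∀ z, |H z| ≤ 2*M := fun z => by
    rw [abs_of_nonneg (hHnn z)]
    exact integral_le_of_le (hgg_int z β inferInstance) fun y => hgg_bdd z y
  set Φ : Euc d → ℝ := fun x => ∫ y, ‖v x - g y‖ ∂β with hΦ
  have hΦsm : StronglyMeasurable Φ :=
    StronglyMeasurable.integral_prod_right' (ν := β)
      (((hvsm.comp_measurable measurable_fst).sub (hgsm.comp_measurable measurable_snd)).norm)
  have hvg_bdd : ∀ x y : Euc d, ‖v x - g y‖ ≤ 2*M := fun x y =>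
    (norm_sub_le _ _).trans (by linarith [hvb x, hgb y])
  have hvg_int : ∀ (x : Euc d) (ν : Measure (Euc d)), IsFiniteMeasure ν →
      Integrable (fun y => ‖v x - g y‖) ν := fun x ν hν =>
    bdd_int ((stronglyMeasurable_const.sub hgsm).norm).aestronglyMeasurable
      (ae_of_all _ fun y => by
        rw [Real.norm_eq_abs, abs_of_nonneg (norm_nonneg _)]
        exact hvg_bdd x y)
  have hΦnn : ∀ x, 0 ≤ Φ x := fun x => integral_nonneg fun y => norm_nonneg _
  have hΦb : ∀ x, |Φ x| ≤ 2*M := fun x => by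
    rw [abs_of_nonneg (hΦnn x)]
    exact integral_le_of_le (hvg_int x β inferInstance) fun y => hvg_bdd x y
  have hq2 : ∀ x, ∫ y, ‖v x - v y‖ ∂α ≤ Φ x := by
    intro x
    have hpt : ∀ y, ‖v x - v y‖ ≤ ∫ z, ‖v x - g z‖ ∂κ y := fun y =>
      jensen_norm' (hgint _ inferInstance) (v x)
    have hin : StronglyMeasurable (fun y => ∫ z, ‖v x - g z‖ ∂κ y) :=
      StronglyMeasurable.integral_kernel_prod_right' (κ := κ)
        ((stronglyMeasurable_const.sub (hgsm.comp_measurable measurable_snd)).norm)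
    have hinb : ∀ y, |∫ z, ‖v x - g z‖ ∂κ y| ≤ 2*M := fun y => by
      rw [abs_of_nonneg (integral_nonneg fun z => norm_nonneg _)]
      exact integral_le_of_le (hvg_int x (κ y) inferInstance) fun z => hvg_bdd x z
    have hmono : ∫ y, ‖v x - v y‖ ∂α ≤ ∫ y, (∫ z, ‖v x - g z‖ ∂κ y) ∂α :=
      integral_mono_of_nonneg (ae_of_all _ fun y => norm_nonneg _)
        (bdd_int hin.aestronglyMeasurable (ae_of_all _ fun y => by simpa using hinb y))
        (ae_of_all _ hpt)
    have heq : ∫ y, (∫ z, ‖v x - g z‖ ∂κ y) ∂α = Φ x := by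
      rw [← hfst]
      exact marg2 ρ hsnd ((stronglyMeasurable_const.sub hgsm).norm)
        (fun z => by
          simp only [Real.norm_eq_abs] at *
          rw [abs_of_nonneg (norm_nonneg _)]; exact hvg_bdd x z)
    linarith
  have hq3 : ∀ x, Φ x ≤ ∫ z, H z ∂κ x := by
    intro x
    have hpt : ∀ y, ‖v x - g y‖ ≤ ∫ z, ‖g z - g y‖ ∂κ x := fun y =>
      jensen_norm (hgint _ inferInstance) (g y)
    have hin : StronglyMeasurable (fun y => ∫ z, ‖g z - g y‖ ∂(κ x)) :=
      StronglyMeasurable.integral_prod_right' (ν := κ x)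
        (((hgsm.comp_measurable measurable_snd).sub (hgsm.comp_measurable measurable_fst)).norm)
    have h1 : Φ x ≤ ∫ y, (∫ z, ‖g z - g y‖ ∂κ x) ∂β := by
      apply integral_mono_of_nonneg (ae_of_all _ fun y => norm_nonneg _)
        (bdd_int hin.aestronglyMeasurable (ae_of_all _ fun y => by
          simp only [Real.norm_eq_abs]
          rw [abs_of_nonneg (integral_nonneg fun z => norm_nonneg _)]
          exact integral_le_of_le (by
            apply bdd_int ((hgsm.sub stronglyMeasurable_const).norm).aestronglyMeasurable
              (C := 2*M)
            refine ae_of_all _ fun z => ?_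
            rw [Real.norm_eq_abs, abs_of_nonneg (norm_nonneg _)]
            exact hgg_bdd z y) fun z => hgg_bdd z y))
        (ae_of_all _ hpt)
    have h2 : ∫ y, (∫ z, ‖g z - g y‖ ∂κ x) ∂β = ∫ z, H z ∂κ x := by
      apply integral_integral_swap (f := fun y z => ‖g z - g y‖)
      apply bdd_int (C := 2*M)
        (((hgsm.comp_measurable measurable_snd).sub
          (hgsm.comp_measurable measurable_fst)).norm).aestronglyMeasurable
      refine ae_of_all _ fun p => ?_
      show ‖‖g p.2 - g p.1‖‖ ≤ 2*M
      rw [Real.norm_eq_abs, abs_of_nonneg (norm_nonneg _)]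
      exact hgg_bdd p.2 p.1
    linarith
  have hq4 : ∫ x, ∫ y, ‖v x - v y‖ ∂α ∂α ≤ ∫ z, H z ∂β := by
    have hκH : StronglyMeasurable (fun x => ∫ z, H z ∂κ x) :=
      StronglyMeasurable.integral_kernel_prod_right' (κ := κ)
        (hHsm.comp_measurable measurable_snd)
    calc ∫ x, ∫ y, ‖v x - v y‖ ∂α ∂α ≤ ∫ x, Φ x ∂α := by
          apply integral_mono_of_nonneg
            (ae_of_all _ fun x => integral_nonneg fun y => norm_nonneg _)
            (bdd_int hΦsm.aestronglyMeasurable (ae_of_all _ fun x => by simpa using hΦb x))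
            (ae_of_all _ hq2)
      _ ≤ ∫ x, (∫ z, H z ∂κ x) ∂α := by
          apply integral_mono_of_nonneg (ae_of_all _ hΦnn)
            (bdd_int hκH.aestronglyMeasurable (ae_of_all _ fun x => by
              simp only [Real.norm_eq_abs]
              rw [abs_of_nonneg (integral_nonneg fun z => hHnn z)]
              exact integral_le_of_le
                (bdd_int hHsm.aestronglyMeasurable
                  (ae_of_all _ fun z => by simpa using hHb z))
                fun z => (le_abs_self _).trans (hHb z)))
            (ae_of_all _ hq3)
      _ = ∫ z, H z ∂β := by
          rw [← hfst]
          exact marg2 ρ hsnd hHsm hHb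
  have hpairwise : ∫ x, ∫ y, ‖v x - v y‖ ∂α ∂α ≤ ∫ x, ∫ y, ‖g x - g y‖ ∂β ∂β := hq4
  have hlp := mul_le_mul_of_nonneg_left hpairwise hlam
  unfold SONJ
  linarith

end Transfer

section Final

variable {lam M : ℝ}

lemma ae_norm_le {μ : Measure (Euc d)} (hμ : μ (Metric.ball (0 : Euc d) M)ᶜ = 0) :
    ∀ᵐ x ∂μ, ‖x‖ ≤ M := by
  rw [ae_iff]
  refine measure_mono_null ?_ hμ
  intro x hx
  simp only [Set.mem_setOf_eq, not_le] at hx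
  simp only [Set.mem_compl_iff, Metric.mem_ball, dist_zero_right, not_lt]
  exact hx.le

lemma ae_fst_bound (ρ : Measure (Euc d × Euc d)) [IsFiniteMeasure ρ]
    {α : Measure (Euc d)} (hfst : ρ.fst = α)
    (hα : α (Metric.ball (0 : Euc d) M)ᶜ = 0) : ∀ᵐ p ∂ρ, ‖p.1‖ ≤ M := by
  rw [ae_iff]
  refine measure_mono_null (t := Prod.fst ⁻¹' (Metric.ball (0 : Euc d) M)ᶜ) ?_ ?_
  · intro p hp
    simp only [Set.mem_setOf_eq, not_le] at hp
    simp only [Set.mem_preimage, Set.mem_compl_iff, Metric.mem_ball, dist_zero_right, not_lt]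
    exact hp.le
  · rw [← Measure.fst_apply measurableSet_ball.compl, hfst, hα]

lemma ae_snd_bound (ρ : Measure (Euc d × Euc d)) [IsFiniteMeasure ρ]
    {β : Measure (Euc d)} (hsnd : ρ.snd = β)
    (hβ : β (Metric.ball (0 : Euc d) M)ᶜ = 0) : ∀ᵐ p ∂ρ, ‖p.2‖ ≤ M := by
  rw [ae_iff]
  refine measure_mono_null (t := Prod.snd ⁻¹' (Metric.ball (0 : Euc d) M)ᶜ) ?_ ?_
  · intro p hp
    simp only [Set.mem_setOf_eq, not_le] at hp
    simp only [Set.mem_preimage, Set.mem_compl_iff, Metric.mem_ball, dist_zero_right, not_lt]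
    exact hp.le
  · rw [← Measure.snd_apply measurableSet_ball.compl, hsnd, hβ]

lemma exists_bounded_rep {μ : Measure (Euc d)} {u : Euc d → Euc d} (hM : 0 ≤ M)
    (hum : AEStronglyMeasurable u μ) (hub : ∀ᵐ x ∂μ, ‖u x‖ ≤ M) :
    ∃ g : Euc d → Euc d, Measurable g ∧ (∀ x, ‖g x‖ ≤ M) ∧ u =ᵐ[μ] g := by
  obtain ⟨g0, hg0, hug0⟩ := hum
  refine ⟨fun x => proj M (g0 x), (proj_meas M).comp hg0.measurable,
    fun x => norm_proj_le hM _, ?_⟩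
  filter_upwards [hug0, hub] with x hx hbx
  have h1 : ‖g0 x‖ ≤ M := hx ▸ hbx
  show u x = proj M (g0 x)
  rw [hx]
  unfold proj
  rw [if_pos h1]

lemma kint_sm (ρ : Measure (Euc d × Euc d)) [IsFiniteMeasure ρ] {g : Euc d → Euc d}
    (hg : Measurable g) :
    StronglyMeasurable (fun x => ∫ y, g y ∂ρ.condKernel x) :=
  StronglyMeasurable.integral_kernel_prod_right'
    (hg.stronglyMeasurable.comp_measurable measurable_snd)

lemma kint_bound (ρ : Measure (Euc d × Euc d)) [IsProbabilityMeasure ρ]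
    {g : Euc d → Euc d} (hg : Measurable g) (hM : 0 ≤ M) (hgb : ∀ y, ‖g y‖ ≤ M) :
    ∀ x, ‖∫ y, g y ∂ρ.condKernel x‖ ≤ M := fun x =>
  norm_int_le (bdd_int hg.stronglyMeasurable.aestronglyMeasurable
    (ae_of_all _ hgb)) hgb

end Final
end SONProof

open SONProof

/-- **Proposition (`W₁`-stability of the minimizer).**  If `μ, μ̃` are probability
measures supported in `B_M(0)` and `π` is a `1`-optimal transport plan from `μ` to `μ̃`
with disintegration `dπ(x,x̃) = dν(x̃|x) dμ(x)`, then
`∫ |u_{μ,λ}(x) - ∫ u_{μ̃,λ}(x̃) dν(x̃|x)|² dμ(x) ≤ 16 M W₁(μ,μ̃)`. -/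
theorem stmt18
    (d : ℕ) (lam : ℝ) (hlam : 0 < lam) (M : ℝ) (hM : 0 < M)
    (μ μt : Measure (Euc d)) [IsProbabilityMeasure μ] [IsProbabilityMeasure μt]
    (hμ : μ (Metric.ball (0 : Euc d) M)ᶜ = 0) (hμt : μt (Metric.ball (0 : Euc d) M)ᶜ = 0)
    (u ut : Euc d → Euc d) (hu : IsSONMin μ lam u) (hut : IsSONMin μt lam ut)
    (π : Measure (Euc d × Euc d)) [IsFiniteMeasure π]
    (hfst : π.fst = μ) (hsnd : π.snd = μt)
    (hopt : ∫⁻ p, edist p.1 p.2 ∂π = W1dist μ μt) :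
    ∫ x, ‖u x - ∫ y, ut y ∂(π.condKernel x)‖ ^ 2 ∂μ ≤
      16 * M * (W1dist μ μt).toReal := by
  haveI hπprob : IsProbabilityMeasure π := by
    constructor
    have h1 : π Set.univ = μ Set.univ := by
      rw [← hfst, Measure.fst_apply MeasurableSet.univ, Set.preimage_univ]
    rw [h1, measure_univ]
  have hμb : ∀ᵐ x ∂μ, ‖x‖ ≤ M := ae_norm_le hμ
  have hμtb : ∀ᵐ x ∂μt, ‖x‖ ≤ M := ae_norm_le hμt
  have hπ1 : ∀ᵐ p ∂π, ‖p.1‖ ≤ M := ae_fst_bound π hfst hμ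
  have hπ2 : ∀ᵐ p ∂π, ‖p.2‖ ≤ M := ae_snd_bound π hsnd hμt
  -- the Wasserstein cost as a real integral
  set Wr : ℝ := ∫ p, ‖p.1 - p.2‖ ∂π with hWr
  have hWrnn : 0 ≤ Wr := integral_nonneg fun p => norm_nonneg _
  have hdist_sm : StronglyMeasurable (fun p : Euc d × Euc d => ‖p.1 - p.2‖) :=
    (measurable_fst.sub measurable_snd).norm.stronglyMeasurable
  have hdist_int : Integrable (fun p : Euc d × Euc d => ‖p.1 - p.2‖) π := by
    apply bdd_int (C := 2*M) hdist_sm.aestronglyMeasurable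
    filter_upwards [hπ1, hπ2] with p h1 h2
    rw [Real.norm_eq_abs, abs_of_nonneg (norm_nonneg _)]
    exact (norm_sub_le _ _).trans (by linarith)
  have hW : (W1dist μ μt).toReal = Wr := by
    have h1 : ∫⁻ p, edist p.1 p.2 ∂π = ENNReal.ofReal Wr := by
      rw [hWr, ofReal_integral_eq_lintegral_ofReal hdist_int
        (ae_of_all _ fun p => norm_nonneg _)]
      apply lintegral_congr fun p => ?_
      rw [edist_dist, dist_eq_norm]
    rw [← hopt, h1, ENNReal.toReal_ofReal hWrnn]
  -- bounded measurable representatives of the minimizers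
  have hub : ∀ᵐ x ∂μ, ‖u x‖ ≤ M := minimizer_bounded hlam.le hM.le hμb hu
  have hutb : ∀ᵐ x ∂μt, ‖ut x‖ ≤ M := minimizer_bounded hlam.le hM.le hμtb hut
  obtain ⟨g, hgm, hgb, hug⟩ := exists_bounded_rep hM.le hu.1.aestronglyMeasurable hub
  obtain ⟨gt, hgtm, hgtb, hutg⟩ := exists_bounded_rep hM.le hut.1.aestronglyMeasurable hutb
  have hgmin : IsSONMin μ lam g := ⟨hu.1.ae_eq hug, fun w hw => SONJ_congr hug ▸ hu.2 w hw⟩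
  have hgtmin : IsSONMin μt lam gt :=
    ⟨hut.1.ae_eq hutg, fun w hw => SONJ_congr hutg ▸ hut.2 w hw⟩
  -- first transfer: from μt to μ
  set V : Euc d → Euc d := fun x => ∫ y, gt y ∂π.condKernel x with hVd
  have htrans1 : SONJ μ lam V ≤ SONJ μt lam gt + 4*M*Wr :=
    transfer hlam.le hM.le μ μt π hfst hsnd hπ1 hπ2 hμb hgtm hgtb
  -- second transfer: reversed coupling
  set π' : Measure (Euc d × Euc d) := π.map Prod.swap with hπ'd
  haveI hπ'prob : IsProbabilityMeasure π' :=
    Measure.isProbabilityMeasure_map measurable_swap.aemeasurable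
  have hfst' : π'.fst = μt := by rw [hπ'd, Measure.fst_map_swap, hsnd]
  have hsnd' : π'.snd = μ := by rw [hπ'd, Measure.snd_map_swap, hfst]
  have hπ'1 : ∀ᵐ p ∂π', ‖p.1‖ ≤ M := ae_fst_bound π' hfst' hμt
  have hπ'2 : ∀ᵐ p ∂π', ‖p.2‖ ≤ M := ae_snd_bound π' hsnd' hμ
  have hW' : ∫ p, ‖p.1 - p.2‖ ∂π' = Wr := by
    rw [hπ'd, integral_map measurable_swap.aemeasurable
      hdist_sm.aestronglyMeasurable]
    rw [hWr]
    apply integral_congr_ae (ae_of_all _ fun p => ?_)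
    show ‖(Prod.swap p).1 - (Prod.swap p).2‖ = ‖p.1 - p.2‖
    rw [Prod.fst_swap, Prod.snd_swap, norm_sub_rev]
  set Wf : Euc d → Euc d := fun x => ∫ y, g y ∂π'.condKernel x with hWfd
  have htrans2 : SONJ μt lam Wf ≤ SONJ μ lam g + 4*M*Wr := by
    have h := transfer hlam.le hM.le μt μ π' hfst' hsnd' hπ'1 hπ'2 hμtb hgm hgb
    rwa [hW'] at h
  have hWf2 : MemLp Wf 2 μt :=
    MemLp.of_bound (kint_sm π' hgm).aestronglyMeasurable M
      (ae_of_all _ (kint_bound π' hgm hM.le hgb))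
  have hV2 : MemLp V 2 μ :=
    MemLp.of_bound (kint_sm π hgtm).aestronglyMeasurable M
      (ae_of_all _ (kint_bound π hgtm hM.le hgtb))
  have hmid : SONJ μt lam gt ≤ SONJ μt lam Wf := hgtmin.2 Wf hWf2
  have hsc : ∫ x, ‖g x - V x‖^2 ∂μ ≤ 2*(SONJ μ lam V - SONJ μ lam g) :=
    strong_convexity hlam.le hM.le hμb hgmin hV2
  have hfinal : ∫ x, ‖g x - V x‖^2 ∂μ ≤ 16*M*Wr := by linarith
  -- rewrite the target integrand
  have hcong : ∫ x, ‖u x - ∫ y, ut y ∂(π.condKernel x)‖ ^ 2 ∂μ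
      = ∫ x, ‖g x - V x‖^2 ∂μ := by
    have hnull : μt {y | ut y ≠ gt y} = 0 := ae_iff.mp hutg
    obtain ⟨N, hsub, hNm, hN0⟩ := exists_measurable_superset_of_null hnull
    have hπae : ∀ᵐ p ∂π, ut p.2 = gt p.2 := by
      rw [ae_iff]
      refine measure_mono_null (t := Prod.snd ⁻¹' N) ?_ ?_
      · intro p hp
        exact hsub hp
      · rw [← Measure.snd_apply hNm, hsnd, hN0]
    have hdis : μ ⊗ₘ π.condKernel = π := by rw [← hfst]; exact π.disintegrate π.condKernel
    have hπae' : ∀ᵐ p ∂(μ ⊗ₘ π.condKernel), ut p.2 = gt p.2 := by rwa [hdis]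
    have hae2 := Measure.ae_ae_of_ae_compProd hπae'
    apply integral_congr_ae
    filter_upwards [hae2, hug] with x h1 h2
    have h3 : ∫ y, ut y ∂π.condKernel x = V x := integral_congr_ae (h1.mono fun y hy => hy)
    rw [h3, h2]
  rw [hcong, hW]
  exact hfinal
end
end
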